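/- arXiv:math/0612139 — 5 statements merged into one kernel-verified Lean document; each statement's English description precedes it below -/
import Mathlib

section
/- Let F = ℂ⟨x₁,…,xₙ⟩ and Φ ∈ F_cyc a potential. For every r ≥ 1 and every r-tuple of indices (i₁,…,i_r), the higher cyclic derivative satisfies the cyclic symmetry σ(∂ʳΦ/∂x_{i₁}…∂x_{i_r}) = ∂ʳΦ/∂x_{σ(i₁)}…∂x_{σ(i_r)}, where on the left σ denotes cyclic permutation of the tensor factors of F^{⊗r} and on the right σ is the corresponding cyclic permutation of the indices. -/
/-!
STATEMENT 2. For `F = ℂ⟨x₁,…,xₙ⟩` and a potential `Φ ∈ F_cyc`, the higher cyclic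
derivatives `∂ʳΦ/∂x_{i₁}…∂x_{i_r} ∈ F^{⊗r}` satisfy the cyclic symmetry
`σ(∂ʳΦ/∂x_{i₁}…∂x_{i_r}) = ∂ʳΦ/∂x_{σ(i₁)}…∂x_{σ(i_r)}`, where `σ` is the cyclic
permutation of the tensor factors of `F^{⊗r}` (resp. the cyclic permutation of the
indices).

We model `⊕_r F^{⊗r}` concretely as formal `ℂ`-linear combinations of tuples of words
(`Tens α` below); a tuple `[t₁,…,t_r]` of words represents the tensor `t₁ ⊗ … ⊗ t_r`.
The higher derivative is defined recursively, as in the paper: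
`∂ʳΦ/∂x_{i₁}∂x_{i₂}…∂x_{i_r} = ∂/∂x_{i₁} (∂^{r-1}Φ/∂x_{i₂}…∂x_{i_r})`, where for `r = 1`
one takes the cyclic derivative and for `r > 1` one applies the double-derivation
`∂/∂x_j : F^{⊗r} → F^{⊗(r+1)}` splitting the first tensor factor at each occurrence of `x_j`.
-/

open scoped BigOperators

noncomputable section

/-- The free associative `ℂ`-algebra on generators indexed by `α`. -/
abbrev FA (α : Type) : Type := MonoidAlgebra ℂ (FreeMonoid α)

/-- Formal `ℂ`-linear combinations of tuples of words: a concrete model for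
`⊕_{r≥0} F^{⊗r}` (a tuple of length `r` spans a line in `F^{⊗r}`). -/
abbrev Tens (α : Type) : Type := (List (List α)) →₀ ℂ

/-- All ways of writing `w = a ++ [j] ++ b`. -/
def splits {α : Type} [DecidableEq α] (j : α) (w : List α) :
    List (List α × List α) :=
  (List.range w.length).filterMap fun s =>
    if w[s]? = some j then some (w.take s, w.drop (s + 1)) else none

/-- All cyclic splittings of a cyclic word `w` at an occurrence of `j`: the results are the
linear words read starting right after the deleted occurrence of `j`. -/
def cycSplits {α : Type} [DecidableEq α] (j : α) (w : List α) : List (List α) :=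
  (splits j w).map fun p => p.2 ++ p.1

/-- Split the first tensor factor of a tuple at each occurrence of `j`
(the double derivation `∂/∂x_j : F^{⊗r} → F^{⊗(r+1)}` on a basis tuple). -/
def splitFirstTup {α : Type} [DecidableEq α] (j : α) : List (List α) → Tens α
  | [] => 0
  | t :: ts => ((splits j t).map fun p => Finsupp.single (p.1 :: p.2 :: ts) (1 : ℂ)).sum

/-- Linear extension of `splitFirstTup`. -/
def splitFirst {α : Type} [DecidableEq α] (j : α) (x : Tens α) : Tens α :=
  Finsupp.sum x fun tup c => c • splitFirstTup j tup

/-- `hdWord i rest w = ∂^{1 + rest.length} w / ∂x_i ∂x_{rest}` for a cyclic word `w`. -/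
def hdWord {α : Type} [DecidableEq α] : α → List α → List α → Tens α
  | i, [], w => ((cycSplits i w).map fun v => Finsupp.single [v] (1 : ℂ)).sum
  | i, k :: rest, w => splitFirst i (hdWord k rest w)

/-- Higher cyclic derivative of a cyclic word with respect to a nonempty list of indices. -/
def hdTuple {α : Type} [DecidableEq α] : List α → List α → Tens α
  | [], _ => 0
  | i :: rest, w => hdWord i rest w

/-- The higher cyclic derivative `∂ʳΦ/∂x_{i₁}…∂x_{i_r} ∈ F^{⊗r}` of `Φ ∈ F`
(well defined on the commutator quotient `F_cyc`). -/
def higherDer {α : Type} [DecidableEq α] (idx : List α) (Φ : FA α) : Tens α :=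
  Finsupp.sum Φ.coeff fun w c => c • hdTuple idx (FreeMonoid.toList w)

/-- The cyclic permutation `σ` of the tensor factors of `F^{⊗r}`. -/
def rotT {α : Type} : Tens α →ₗ[ℂ] Tens α :=
  Finsupp.lmapDomain ℂ ℂ fun l : List (List α) => l.rotate 1

namespace CycAux

variable {α : Type} [DecidableEq α] {M : Type*} [AddCommMonoid M]

/-- Sum of `g` over a list. -/
def SL {β : Type*} (l : List β) (g : β → M) : M := (l.map g).sum

@[simp] lemma SL_nil {β : Type*} (g : β → M) : SL [] g = 0 := rfl

@[simp] lemma SL_cons {β : Type*} (b : β) (l : List β) (g : β → M) :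
    SL (b :: l) g = g b + SL l g := rfl

@[simp] lemma SL_append {β : Type*} (l₁ l₂ : List β) (g : β → M) :
    SL (l₁ ++ l₂) g = SL l₁ g + SL l₂ g := by simp [SL]

@[simp] lemma SL_map {β γ : Type*} (h : β → γ) (l : List β) (g : γ → M) :
    SL (l.map h) g = SL l (fun x => g (h x)) := by simp [SL]; rfl

lemma SL_congr {β : Type*} {l : List β} {g h : β → M} (H : ∀ x ∈ l, g x = h x) :
    SL l g = SL l h := by
  induction l with
  | nil => rfl
  | cons b t ih => simp only [SL_cons, H b (by simp)]; rw [ih (fun x hx => H x (by simp [hx]))]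

lemma SL_add {β : Type*} (l : List β) (g h : β → M) :
    SL l (fun x => g x + h x) = SL l g + SL l h := by
  induction l with
  | nil => simp
  | cons b t ih => simp [ih]; abel

lemma SL_hom {β : Type*} {N : Type*} [AddCommMonoid N] (F : M →+ N) (l : List β) (g : β → M) :
    F (SL l g) = SL l (fun x => F (g x)) := by
  induction l with
  | nil => simp
  | cons b t ih => simp [ih]

@[simp] lemma SL_zero {β : Type*} (l : List β) : SL l (fun _ => (0 : M)) = 0 := by
  simp [SL]

lemma SL_smul {β : Type*} {R : Type*} [Semiring R] [Module R M] (c : R) (l : List β)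
    (g : β → M) : c • SL l g = SL l (fun x => c • g x) := by
  induction l with
  | nil => simp
  | cons b t ih => simp [smul_add, ih]

@[simp] lemma splits_nil (j : α) : splits j ([] : List α) = [] := rfl

lemma splits_cons (j c : α) (v : List α) :
    splits j (c :: v) =
      (if c = j then [(([] : List α), v)] else []) ++
        (splits j v).map (fun p => (c :: p.1, p.2)) := by
  have key : List.filterMap
        (fun s => if (c :: v)[s+1]? = some j
            then some (List.take (s+1) (c::v), List.drop (s + 1 + 1) (c::v)) else none)
        (List.range v.length) =
      (splits j v).map (fun p => (c :: p.1, p.2)) := by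
    unfold splits
    rw [List.map_filterMap]
    congr 1; funext x
    by_cases hx : v[x]? = some j <;> simp [hx]
  conv_lhs => rw [splits]
  rw [List.length_cons, List.range_succ_eq_map, List.filterMap_cons, List.filterMap_map]
  have key2 : ((fun s => if (c :: v)[s]? = some j
        then some ((c::v).take s, (c::v).drop (s+1)) else none) ∘ Nat.succ)
      = fun s => if (c :: v)[s+1]? = some j
        then some (List.take (s+1) (c::v), List.drop (s + 1 + 1) (c::v)) else none := rfl
  rw [key2, key]
  by_cases h : c = j <;> simp [h]

lemma splits_append (j : α) (u t : List α) :
    splits j (u ++ t) =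
      (splits j u).map (fun p => (p.1, p.2 ++ t)) ++
        (splits j t).map (fun p => (u ++ p.1, p.2)) := by
  induction u with
  | nil => simp
  | cons c u ih =>
    by_cases h : c = j <;>
      simp [splits_cons, ih, h, List.map_map, Function.comp_def]

/-- The fundamental exchange rule for iterated splittings. -/
lemma splits2 (x y : α) (v : List α) (F : List α → List α → List α → M) :
    SL (splits y v) (fun p => SL (splits x p.1) (fun q => F q.1 q.2 p.2)) =
    SL (splits x v) (fun p => SL (splits y p.2) (fun q => F p.1 q.1 q.2)) := by
  induction v generalizing F with
  | nil => simp
  | cons c v ih =>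
    rw [splits_cons y c v, splits_cons x c v]
    rw [SL_append, SL_append, SL_map, SL_map]
    have h1 : SL (if c = y then [(([] : List α), v)] else [])
        (fun p => SL (splits x p.1) (fun q => F q.1 q.2 p.2)) = 0 := by
      by_cases h : c = y <;> simp [h]
    rw [h1, zero_add]
    have h2 : ∀ p : List α × List α,
        SL (splits x (c :: p.1)) (fun q => F q.1 q.2 p.2)
          = (if c = x then F [] p.1 p.2 else 0)
            + SL (splits x p.1) (fun q => F (c :: q.1) q.2 p.2) := by
      intro p
      rw [splits_cons x c p.1, SL_append, SL_map]
      by_cases h : c = x <;> simp [h]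
    rw [SL_congr (fun p _ => h2 p), SL_add]
    rw [ih (fun a b d => F (c :: a) b d)]
    congr 1
    by_cases h : c = x <;> simp [h]

/-- The cyclic exchange rule: splitting cyclically at `jl` then linearly at `i`
is the same as splitting cyclically at `i` then linearly at `jl` (with the two
pieces swapped). -/
lemma cyc2 (i jl : α) (w : List α) (f : List α → List α → M) :
    SL (cycSplits jl w) (fun v => SL (splits i v) (fun q => f q.1 q.2)) =
    SL (cycSplits i w) (fun u => SL (splits jl u) (fun q => f q.2 q.1)) := by
  unfold cycSplits
  rw [SL_map, SL_map]
  have expand1 : ∀ p : List α × List α,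
      SL (splits i (p.2 ++ p.1)) (fun q => f q.1 q.2)
        = SL (splits i p.2) (fun q => f q.1 (q.2 ++ p.1))
          + SL (splits i p.1) (fun q => f (p.2 ++ q.1) q.2) := by
    intro p; rw [splits_append, SL_append, SL_map, SL_map]
  have expand2 : ∀ p : List α × List α,
      SL (splits jl (p.2 ++ p.1)) (fun q => f q.2 q.1)
        = SL (splits jl p.2) (fun q => f (q.2 ++ p.1) q.1)
          + SL (splits jl p.1) (fun q => f q.2 (p.2 ++ q.1)) := by
    intro p; rw [splits_append, SL_append, SL_map, SL_map]
  rw [SL_congr (fun p _ => expand1 p), SL_add]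
  rw [SL_congr (fun p _ => expand2 p), SL_add]
  rw [splits2 i jl w (fun a b d => f (d ++ a) b)]
  rw [splits2 jl i w (fun a b d => f b (d ++ a))]
  exact add_comm _ _

/-- Prepend a word to a tuple (as an additive map on `Tens`). -/
def prepF (a : List α) : Tens α →+ Tens α :=
  Finsupp.mapDomain.addMonoidHom (fun tup : List (List α) => a :: tup)

/-- Append a word to a tuple (as an additive map on `Tens`). -/
def appF (a : List α) : Tens α →+ Tens α :=
  Finsupp.mapDomain.addMonoidHom (fun tup : List (List α) => tup ++ [a])

@[simp] lemma prepF_single (a : List α) (tup : List (List α)) (c : ℂ) :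
    prepF a (Finsupp.single tup c) = Finsupp.single (a :: tup) c :=
  Finsupp.mapDomain_single

@[simp] lemma appF_single (a : List α) (tup : List (List α)) (c : ℂ) :
    appF a (Finsupp.single tup c) = Finsupp.single (tup ++ [a]) c :=
  Finsupp.mapDomain_single

/-- The iterated linear splitting: `E [j₁,…,j_m] v = Σ single [t₁,…,t_{m+1}]` over
all decompositions `v = t₁ j₁ t₂ j₂ … j_m t_{m+1}`. -/
def E : List α → List α → Tens α
  | [], v => Finsupp.single [v] 1
  | j :: js, v => SL (splits j v) (fun p => prepF p.1 (E js p.2))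

lemma splitFirst_single (j : α) (tup : List (List α)) (c : ℂ) :
    splitFirst j (Finsupp.single tup c) = c • splitFirstTup j tup :=
  Finsupp.sum_single_index (by simp)

lemma splitFirst_add (j : α) (x y : Tens α) :
    splitFirst j (x + y) = splitFirst j x + splitFirst j y :=
  Finsupp.sum_add_index' (fun _ => by simp) (fun _ c₁ c₂ => add_smul c₁ c₂ _)

/-- `splitFirst` as an additive map. -/
def splitFirstHom (j : α) : Tens α →+ Tens α :=
  AddMonoidHom.mk' (splitFirst j) (splitFirst_add j)

lemma splitFirst_SL {β : Type*} (j : α) (l : List β) (g : β → Tens α) :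
    splitFirst j (SL l g) = SL l (fun x => splitFirst j (g x)) :=
  SL_hom (splitFirstHom j) l g

lemma splitFirstTup_cons (j : α) (t : List α) (ts : List (List α)) :
    splitFirstTup j (t :: ts)
      = SL (splits j t) (fun p => Finsupp.single (p.1 :: p.2 :: ts) (1 : ℂ)) := rfl

lemma splitFirst_prepF (i : α) (a : List α) (X : Tens α) :
    splitFirst i (prepF a X) = SL (splits i a) (fun q => prepF q.1 (prepF q.2 X)) := by
  induction X using Finsupp.induction_linear with
  | zero => simp [splitFirst]
  | add x y hx hy =>
      rw [map_add, splitFirst_add, hx, hy, ← SL_add]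
      exact SL_congr (fun q _ => by rw [map_add, map_add])
  | single tup c =>
      rw [prepF_single, splitFirst_single, splitFirstTup_cons, SL_smul]
      exact SL_congr (fun q _ => by simp [Finsupp.smul_single])

lemma splitFirst_E (i : α) (js : List α) (v : List α) :
    splitFirst i (E js v) = E (i :: js) v := by
  induction js generalizing v with
  | nil =>
      show splitFirst i (Finsupp.single [v] 1) = _
      rw [splitFirst_single, one_smul, splitFirstTup_cons]
      show _ = SL (splits i v) (fun p => prepF p.1 (Finsupp.single [p.2] 1))
      exact SL_congr (fun q _ => by simp)
  | cons j js ih =>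
      show splitFirst i (SL (splits j v) (fun p => prepF p.1 (E js p.2))) = _
      rw [splitFirst_SL]
      rw [SL_congr (fun p _ => splitFirst_prepF i p.1 (E js p.2))]
      rw [splits2 i j v (fun a b d => prepF a (prepF b (E js d)))]
      show _ = SL (splits i v) (fun p => prepF p.1 (E (j :: js) p.2))
      refine SL_congr (fun p _ => ?_)
      show _ = prepF p.1 (SL (splits j p.2) (fun q => prepF q.1 (E js q.2)))
      rw [SL_hom (prepF p.1)]

lemma hdWord_nil (i : α) (w : List α) :
    hdWord i [] w = SL (cycSplits i w) (fun v => E [] v) := rfl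

lemma hdWord_concat (i : α) (rest : List α) (jl : α) (w : List α) :
    hdWord i (rest ++ [jl]) w = SL (cycSplits jl w) (fun v => E (i :: rest) v) := by
  induction rest generalizing i with
  | nil =>
      show splitFirst i (hdWord jl [] w) = _
      rw [hdWord_nil, splitFirst_SL]
      exact SL_congr (fun v _ => splitFirst_E i [] v)
  | cons k rest ih =>
      show splitFirst i (hdWord k (rest ++ [jl]) w) = _
      rw [ih k, splitFirst_SL]
      exact SL_congr (fun v _ => splitFirst_E i (k :: rest) v)

lemma prepF_appF (a d : List α) (X : Tens α) :
    prepF a (appF d X) = appF d (prepF a X) := by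
  induction X using Finsupp.induction_linear with
  | zero => simp
  | add x y hx hy => simp [map_add, hx, hy]
  | single tup c => simp

lemma E_last (js : List α) (jl : α) (u : List α) :
    E (js ++ [jl]) u = SL (splits jl u) (fun q => appF q.2 (E js q.1)) := by
  induction js generalizing u with
  | nil =>
      show SL (splits jl u) (fun p => prepF p.1 (Finsupp.single [p.2] 1)) = _
      refine SL_congr (fun q _ => ?_)
      show prepF q.1 (Finsupp.single [q.2] 1) = appF q.2 (Finsupp.single [q.1] 1)
      simp
  | cons j js ih =>
      show SL (splits j u) (fun p => prepF p.1 (E (js ++ [jl]) p.2)) = _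
      rw [SL_congr (fun p _ => by rw [ih p.2])]
      rw [SL_congr (fun p (_ : p ∈ splits j u) => SL_hom (prepF p.1) (splits jl p.2) _)]
      rw [← splits2 j jl u (fun a b d => prepF a (appF d (E js b)))]
      refine SL_congr (fun p _ => ?_)
      show _ = appF p.2 (SL (splits j p.1) (fun q => prepF q.1 (E js q.2)))
      rw [SL_hom (appF p.2)]
      exact SL_congr (fun q _ => prepF_appF q.1 p.2 (E js q.2))

lemma rotT_single (tup : List (List α)) (c : ℂ) :
    rotT (Finsupp.single tup c) = Finsupp.single (tup.rotate 1) c := by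
  simp [rotT, Finsupp.lmapDomain, Finsupp.mapDomain_single]

lemma rotT_SL {β : Type*} (l : List β) (g : β → Tens α) :
    rotT (SL l g) = SL l (fun x => rotT (g x)) :=
  SL_hom (rotT : Tens α →ₗ[ℂ] Tens α).toAddMonoidHom l g

lemma rotT_prepF (a : List α) (X : Tens α) : rotT (prepF a X) = appF a X := by
  induction X using Finsupp.induction_linear with
  | zero => simp
  | add x y hx hy => simp [map_add, hx, hy]
  | single tup c =>
      rw [prepF_single, rotT_single, appF_single]
      congr 1
      rw [List.rotate_cons_succ, List.rotate_zero]

lemma key_word (i : α) (rest w : List α) :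
    rotT (hdTuple (i :: rest) w) = hdTuple ((i :: rest).rotate 1) w := by
  rcases List.eq_nil_or_concat rest with rfl | ⟨js, jl, rfl⟩
  · have h1 : ([i] : List α).rotate 1 = [i] := by simp
    rw [h1]
    show rotT (hdWord i [] w) = hdWord i [] w
    rw [hdWord_nil, rotT_SL]
    refine SL_congr (fun v _ => ?_)
    show rotT (Finsupp.single [v] 1) = Finsupp.single [v] 1
    rw [rotT_single]
    simp
  · simp only [List.concat_eq_append]
    have h1 : (i :: (js ++ [jl])).rotate 1 = (js ++ [jl]) ++ [i] := by
      rw [List.rotate_cons_succ, List.rotate_zero]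
    rw [h1]
    obtain ⟨k, t, hkt⟩ : ∃ k t, js ++ [jl] = k :: t :=
      match js with
      | [] => ⟨jl, [], rfl⟩
      | a :: s => ⟨a, s ++ [jl], rfl⟩
    have lhs1 : hdTuple (i :: (js ++ [jl])) w = SL (cycSplits jl w) (fun v => E (i :: js) v) :=
      hdWord_concat i js jl w
    have rhs1 : hdTuple ((js ++ [jl]) ++ [i]) w = SL (cycSplits i w) (fun u => E (js ++ [jl]) u) := by
      rw [hkt]
      show hdWord k (t ++ [i]) w = _
      rw [hdWord_concat k t i w]
    rw [lhs1, rhs1, rotT_SL]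
    have expand : ∀ v, rotT (E (i :: js) v)
        = SL (splits i v) (fun p => appF p.1 (E js p.2)) := by
      intro v
      show rotT (SL (splits i v) (fun p => prepF p.1 (E js p.2))) = _
      rw [rotT_SL]
      exact SL_congr (fun p _ => rotT_prepF p.1 (E js p.2))
    rw [SL_congr (fun v _ => expand v)]
    rw [cyc2 i jl w (fun a b => appF a (E js b))]
    exact SL_congr (fun u _ => (E_last js jl u).symm)

end CycAux

/-- Cyclic symmetry of higher cyclic derivatives:
`σ (∂ʳΦ/∂x_{i₁}…∂x_{i_r}) = ∂ʳΦ/∂x_{σ(i₁)}…∂x_{σ(i_r)}`. -/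
theorem higher_derivative_cyclic_symmetry {α : Type} [DecidableEq α]
    (Φ : FA α) (idx : List α) (hidx : idx ≠ []) :
    rotT (higherDer idx Φ) = higherDer (idx.rotate 1) Φ := by
  obtain ⟨i, rest, rfl⟩ := List.exists_cons_of_ne_nil hidx
  unfold higherDer
  rw [map_finsuppSum]
  refine Finsupp.sum_congr (fun w _ => ?_)
  rw [map_smul, CycAux.key_word]
end
end

section
/- Let F = ℂ⟨x₁,…,xₙ⟩ and let Φ ∈ F_cyc. Then the n-tuple of cyclic derivatives satisfies the identity Σ_{i=1}^{n} [x_i, ∂Φ/∂x_i] = 0 in F. (This is the '⇐' direction of the noncommutative Poincaré lemma.) -/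
open scoped BigOperators

noncomputable section

/-- The generator `x_i` of the free algebra. -/
def gen {α : Type} (i : α) : FA α :=
  MonoidAlgebra.of ℂ (FreeMonoid α) (FreeMonoid.of i)

/-- The monomial of the free algebra corresponding to a word. -/
def wordElt {α : Type} (w : List α) : FA α :=
  MonoidAlgebra.of ℂ (FreeMonoid α) (FreeMonoid.ofList w)

/-- Cyclic derivative of a single cyclic word: delete each occurrence of `j`
and read the cycle starting right after the deleted letter. -/
def cycDerWord {α : Type} [DecidableEq α] (j : α) (w : List α) : FA α :=
  ((splits j w).map fun p => wordElt (p.2 ++ p.1)).sum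

/-- The cyclic derivative `∂/∂x_j : F_cyc → F` (computed on a representative in `F`;
it is invariant under cyclic rotation of words, hence well defined on `F_cyc`). -/
def cycDer {α : Type} [DecidableEq α] (j : α) (Φ : FA α) : FA α :=
  Finsupp.sum Φ.coeff fun w c => c • cycDerWord j (FreeMonoid.toList w)


lemma wordElt_append {α : Type} (a b : List α) :
    wordElt (a ++ b) = wordElt a * wordElt b := by
  simp only [wordElt, ← map_mul]
  rfl

lemma gen_eq {α : Type} (i : α) : gen i = wordElt [i] := rfl

lemma sum_filterMap_ite {α : Type} (l : List ℕ) (p : ℕ → Prop) [DecidablePred p]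
    (f : ℕ → FA α) :
    (l.filterMap fun s => if p s then some (f s) else none).sum
      = (l.map fun s => if p s then f s else 0).sum := by
  induction l with
  | nil => simp
  | cons a t ih => by_cases h : p a <;> simp [h, ih]

lemma cycDerWord_eq {n : ℕ} (j : Fin n) (w : List (Fin n)) :
    cycDerWord j w = ∑ s ∈ Finset.range w.length,
      if w[s]? = some j then wordElt (w.drop (s+1) ++ w.take s) else 0 := by
  have : ∑ s ∈ Finset.range w.length,
      (if w[s]? = some j then wordElt (w.drop (s+1) ++ w.take s) else 0)
      = ((List.range w.length).map fun s =>
          if w[s]? = some j then wordElt (w.drop (s+1) ++ w.take s) else 0).sum := rfl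
  rw [this, cycDerWord, splits, List.map_filterMap, ← sum_filterMap_ite]
  congr 1
  apply List.filterMap_congr
  intro s _
  by_cases h : w[s]? = some j <;> simp [h]

lemma word_key {n : ℕ} (w : List (Fin n)) :
    ∑ i : Fin n, (gen i * cycDerWord i w - cycDerWord i w * gen i) = 0 := by
  have key : ∑ i : Fin n, (gen i * cycDerWord i w - cycDerWord i w * gen i)
      = ∑ s ∈ Finset.range w.length,
          (wordElt (w.drop s ++ w.take s) - wordElt (w.drop (s+1) ++ w.take (s+1))) := by
    have h1 : ∀ i : Fin n, gen i * cycDerWord i w - cycDerWord i w * gen i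
        = ∑ s ∈ Finset.range w.length,
            (if w[s]? = some i then
              (gen i * wordElt (w.drop (s+1) ++ w.take s)
                - wordElt (w.drop (s+1) ++ w.take s) * gen i) else 0) := by
      intro i
      rw [cycDerWord_eq, Finset.mul_sum, Finset.sum_mul, ← Finset.sum_sub_distrib]
      apply Finset.sum_congr rfl
      intro s _
      split_ifs <;> simp
    simp only [h1]
    rw [Finset.sum_comm]
    apply Finset.sum_congr rfl
    intro s hs
    rw [Finset.mem_range] at hs
    have hget : w[s]? = some (w.get ⟨s, hs⟩) := List.getElem?_eq_getElem hs
    set a : Fin n := w.get ⟨s, hs⟩ with ha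
    have hsum : ∑ i : Fin n,
        (if w[s]? = some i then
          (gen i * wordElt (w.drop (s+1) ++ w.take s)
            - wordElt (w.drop (s+1) ++ w.take s) * gen i) else 0)
        = gen a * wordElt (w.drop (s+1) ++ w.take s)
            - wordElt (w.drop (s+1) ++ w.take s) * gen a := by
      rw [Fintype.sum_eq_single a]
      · rw [if_pos hget]
      · intro b hb
        rw [hget, if_neg (by simpa using fun h => hb h.symm)]
    rw [hsum]
    have hdrop : w.drop s = a :: w.drop (s+1) := List.drop_eq_getElem_cons hs
    have htake : w.take (s+1) = w.take s ++ [a] := by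
      rw [List.take_succ, List.getElem?_eq_getElem hs]; rfl
    have e1 : wordElt (w.drop s ++ w.take s)
        = gen a * wordElt (w.drop (s+1) ++ w.take s) := by
      rw [hdrop, gen_eq, ← wordElt_append]
      rfl
    have e2 : wordElt (w.drop (s+1) ++ w.take (s+1))
        = wordElt (w.drop (s+1) ++ w.take s) * gen a := by
      rw [htake, gen_eq, ← wordElt_append, List.append_assoc]
    rw [e1, e2]
  rw [key, Finset.sum_range_sub' (fun s => wordElt (w.drop s ++ w.take s))]
  simp

/-!
STATEMENT 3. For any potential `Φ ∈ F_cyc` on `F = ℂ⟨x₁,…,xₙ⟩`, one has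
`Σ_{i=1}^{n} [x_i, ∂Φ/∂x_i] = 0` in `F`. -/
theorem sum_commutators_of_cyclic_derivatives_eq_zero (n : ℕ) (Φ : FA (Fin n)) :
    ∑ i : Fin n, (gen i * cycDer i Φ - cycDer i Φ * gen i) = 0 := by
  have h1 : ∀ i : Fin n, gen i * cycDer i Φ - cycDer i Φ * gen i
      = ∑ w ∈ Φ.coeff.support, Φ.coeff w • (gen i * cycDerWord i (FreeMonoid.toList w)
          - cycDerWord i (FreeMonoid.toList w) * gen i) := by
    intro i
    rw [cycDer, Finsupp.sum, Finset.mul_sum, Finset.sum_mul, ← Finset.sum_sub_distrib]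
    apply Finset.sum_congr rfl
    intro w _
    rw [mul_smul_comm, smul_mul_assoc, smul_sub]
  simp only [h1]
  rw [Finset.sum_comm]
  refine Finset.sum_eq_zero fun w _ => ?_
  rw [← Finset.smul_sum, word_key]
  simp
end
end

section
/- Let F = ℂ⟨x₁,…,xₙ⟩ and suppose f₁,…,fₙ ∈ F satisfy Σ_{i=1}^{n} [x_i, f_i] = 0. Then there exists a potential Φ ∈ F_cyc such that f_i = ∂Φ/∂x_i for all i = 1,…,n. -/
open scoped BigOperators

noncomputable section

namespace NCP

set_option linter.unusedSectionVars false

variable {α : Type} [DecidableEq α]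

/-- Delete a leading `j`, else `0`. -/
def Tword (j : α) : List α → FA α
  | [] => 0
  | a :: t => if a = j then wordElt t else 0

def Vword (j : α) (u : List α) : FA α :=
  ∑ s ∈ Finset.range u.length, ((s : ℂ) / (u.length : ℂ)) • Tword j (u.rotate s)

def rotW (w : FreeMonoid α) : FreeMonoid α :=
  FreeMonoid.ofList ((FreeMonoid.toList w).rotate 1)

def mkL (φ : FreeMonoid α → FA α) : FA α →ₗ[ℂ] FA α :=
  (Finsupp.lsum ℂ fun w => LinearMap.toSpanSingleton ℂ (FA α) (φ w)) ∘ₗ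
    (MonoidAlgebra.coeffLinearEquiv ℂ).toLinearMap

lemma mkL_single (φ : FreeMonoid α → FA α) (w : FreeMonoid α) (c : ℂ) :
    mkL φ (MonoidAlgebra.single w c) = c • φ w := by
  show Finsupp.lsum ℂ (fun w => LinearMap.toSpanSingleton ℂ (FA α) (φ w)) (Finsupp.single w c) = _
  rw [Finsupp.lsum_single, LinearMap.toSpanSingleton_apply]

def TL (j : α) : FA α →ₗ[ℂ] FA α := mkL fun w => Tword j (FreeMonoid.toList w)
def VL (j : α) : FA α →ₗ[ℂ] FA α := mkL fun w => Vword j (FreeMonoid.toList w)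
def RL : FA α →ₗ[ℂ] FA α := mkL fun w => MonoidAlgebra.single (rotW w) 1
def SL : FA α →ₗ[ℂ] FA α :=
  mkL fun w => (((FreeMonoid.toList w).length : ℂ))⁻¹ • MonoidAlgebra.single w 1
def cycDerL (j : α) : FA α →ₗ[ℂ] FA α := mkL fun w => cycDerWord j (FreeMonoid.toList w)

lemma cycDer_eq (j : α) (x : FA α) : cycDer j x = cycDerL j x := rfl

lemma wordElt_eq (u : List α) :
    wordElt u = MonoidAlgebra.single (FreeMonoid.ofList u) (1 : ℂ) := by
  simp [wordElt, MonoidAlgebra.of_apply]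

lemma gen_mul_single (i : α) (w : FreeMonoid α) (c : ℂ) :
    gen i * MonoidAlgebra.single w c = MonoidAlgebra.single (FreeMonoid.of i * w) c := by
  rw [gen, MonoidAlgebra.of_apply, MonoidAlgebra.single_mul_single, one_mul]

lemma single_mul_gen (i : α) (w : FreeMonoid α) (c : ℂ) :
    MonoidAlgebra.single w c * gen i = MonoidAlgebra.single (w * FreeMonoid.of i) c := by
  rw [gen, MonoidAlgebra.of_apply, MonoidAlgebra.single_mul_single, mul_one]

/- list sum helpers -/
lemma list_sum_filterMap_map {β M : Type} [AddCommMonoid M]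
    (g : ℕ → Option β) (h : β → M) (l : List ℕ) :
    ((l.filterMap g).map h).sum = (l.map fun s => ((g s).map h).getD 0).sum := by
  induction l with
  | nil => simp
  | cons a t ih =>
    rw [List.filterMap_cons]
    cases hg : g a <;> simp [hg, ih]

lemma list_range_sum {M : Type} [AddCommMonoid M] (f : ℕ → M) (n : ℕ) :
    ((List.range n).map f).sum = ∑ s ∈ Finset.range n, f s := by
  induction n with
  | zero => simp
  | succ m ih => rw [List.range_succ, Finset.sum_range_succ, ← ih]; simp

lemma rotate_spec (u : List α) {s : ℕ} (h : s < u.length) :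
    u.rotate s = u[s] :: (u.drop (s + 1) ++ u.take s) := by
  rw [List.rotate_eq_drop_append_take h.le]
  conv_lhs => rw [List.drop_eq_getElem_cons h]
  rw [List.cons_append]

lemma cycDerWord_eq (j : α) (u : List α) :
    cycDerWord j u = ∑ s ∈ Finset.range u.length, Tword j (u.rotate s) := by
  rw [cycDerWord, splits, list_sum_filterMap_map, list_range_sum]
  refine Finset.sum_congr rfl fun s hs => ?_
  have h : s < u.length := Finset.mem_range.mp hs
  have hget : u[s]? = some u[s] := by
    rw [List.getElem?_eq_getElem h]
  rw [rotate_spec u h]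
  by_cases hj : u[s] = j
  · rw [hget, hj]
    simp [Tword]
  · have : ¬ (u[s]? = some j) := by rw [hget]; simpa using hj
    rw [if_neg this]
    simp [Tword, hj]

/- summation reindexing -/
lemma sumA {M : Type} [AddCommMonoid M] (c : ℕ → M) (m : ℕ) (hc : c (m + 1) = c 0) :
    ∑ s ∈ Finset.range (m + 1), c (s + 1) = ∑ s ∈ Finset.range (m + 1), c s := by
  rw [Finset.sum_range_succ, Finset.sum_range_succ' (fun s => c s) m, hc]

lemma sumB {M : Type} [AddCommMonoid M] [Module ℂ M] (c : ℕ → M) (m : ℕ)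
    (hc : c (m + 1) = c 0) (g : ℕ → ℂ) (h0 : g 0 = 0) (hm : g (m + 1) = 1) :
    ∑ s ∈ Finset.range (m + 1), g (s + 1) • c (s + 1)
      = (∑ s ∈ Finset.range (m + 1), g s • c s) + c 0 := by
  rw [Finset.sum_range_succ, Finset.sum_range_succ' (fun s => g s • c s) m, hc, hm, h0,
    zero_smul, one_smul, add_zero]

/- the key word-wise identity -/
lemma key_word (j : α) (u : List α) :
    ((u.length : ℂ))⁻¹ • cycDerWord j u + Vword j (u.rotate 1)
      = Tword j u + Vword j u := by
  rcases u with _ | ⟨a, t⟩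
  · simp [cycDerWord, splits, Vword, Tword]
  set u : List α := a :: t with hu
  obtain ⟨m, hm⟩ : ∃ m, u.length = m + 1 := ⟨t.length, by simp [hu]⟩
  set c : ℕ → FA α := fun s => Tword j (u.rotate s) with hc
  have hcl : c (u.length) = c 0 := by
    simp only [hc, List.rotate_length, List.rotate_zero]
  have h3 : Vword j (u.rotate 1) =
      ∑ s ∈ Finset.range u.length, ((s : ℂ) / (u.length : ℂ)) • c (s + 1) := by
    rw [Vword, List.length_rotate]
    refine Finset.sum_congr rfl fun s _ => ?_
    rw [List.rotate_rotate, Nat.add_comm 1 s]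
  have h1 : cycDerWord j u = ∑ s ∈ Finset.range u.length, c s := cycDerWord_eq j u
  have hT0 : Tword j u = c 0 := by rw [hc]; simp
  have h2 : Vword j u = ∑ s ∈ Finset.range u.length, ((s : ℂ) / (u.length : ℂ)) • c s := rfl
  rw [h1, h2, h3, hT0, Finset.smul_sum]
  rw [hm]
  have hℓ : (((m : ℕ) + 1 : ℕ) : ℂ) ≠ 0 := by exact_mod_cast Nat.succ_ne_zero m
  have hcl' : c (m + 1) = c 0 := by rw [← hm]; exact hcl
  have hA : ∑ s ∈ Finset.range (m + 1), (((m + 1 : ℕ) : ℂ))⁻¹ • c s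
      = ∑ s ∈ Finset.range (m + 1), (((m + 1 : ℕ) : ℂ))⁻¹ • c (s + 1) :=
    (sumA (fun s => (((m + 1 : ℕ) : ℂ))⁻¹ • c s) m (by simp only [hcl'])).symm
  rw [hA, ← Finset.sum_add_distrib]
  have hcomb : ∀ s : ℕ, (((m + 1 : ℕ) : ℂ))⁻¹ • c (s + 1)
      + ((s : ℂ) / ((m + 1 : ℕ) : ℂ)) • c (s + 1)
      = (((s + 1 : ℕ) : ℂ) / ((m + 1 : ℕ) : ℂ)) • c (s + 1) := by
    intro s
    rw [← add_smul]
    congr 1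
    push_cast
    field_simp
    ring
  calc ∑ s ∈ Finset.range (m + 1),
        ((((m + 1 : ℕ) : ℂ))⁻¹ • c (s + 1) + ((s : ℂ) / ((m + 1 : ℕ) : ℂ)) • c (s + 1))
      = ∑ s ∈ Finset.range (m + 1), (((s + 1 : ℕ) : ℂ) / ((m + 1 : ℕ) : ℂ)) • c (s + 1) :=
        Finset.sum_congr rfl fun s _ => hcomb s
    _ = (∑ s ∈ Finset.range (m + 1), ((s : ℂ) / ((m + 1 : ℕ) : ℂ)) • c s) + c 0 := by
        refine sumB c m hcl' (fun s => ((s : ℂ) / ((m + 1 : ℕ) : ℂ))) (by simp) ?_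
        have h' : ((m : ℂ) + 1) ≠ 0 := by exact_mod_cast Nat.succ_ne_zero m
        push_cast
        exact div_self h'
    _ = c 0 + ∑ s ∈ Finset.range (m + 1), ((s : ℂ) / ((m + 1 : ℕ) : ℂ)) • c s := add_comm _ _

end NCP

namespace NCP

set_option linter.unusedSectionVars false

variable {α : Type} [DecidableEq α]

lemma rotW_of_mul (i : α) (w : FreeMonoid α) :
    rotW (FreeMonoid.of i * w) = w * FreeMonoid.of i := by
  rw [rotW]
  have h1 : FreeMonoid.toList (FreeMonoid.of i * w) = i :: FreeMonoid.toList w := rfl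
  rw [h1, List.rotate_cons_succ, List.rotate_zero, FreeMonoid.ofList_append,
    FreeMonoid.ofList_toList, FreeMonoid.ofList_singleton]

lemma RL_gen_mul (i : α) (x : FA α) : RL (gen i * x) = x * gen i := by
  have h : RL (α := α) ∘ₗ LinearMap.mulLeft ℂ (gen i) = LinearMap.mulRight ℂ (gen i) := by
    apply MonoidAlgebra.lhom_ext'
    intro w
    apply LinearMap.ext
    intro cc
    simp only [LinearMap.comp_apply, MonoidAlgebra.lsingle_apply, LinearMap.mulLeft_apply,
      LinearMap.mulRight_apply, gen_mul_single, single_mul_gen, RL, mkL_single, rotW_of_mul]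
    rw [MonoidAlgebra.smul_single', mul_one]
  exact LinearMap.congr_fun h x

lemma TL_gen_mul (i j : α) (x : FA α) : TL j (gen i * x) = if i = j then x else 0 := by
  have h : TL (α := α) j ∘ₗ LinearMap.mulLeft ℂ (gen i)
      = if i = j then LinearMap.id else 0 := by
    apply MonoidAlgebra.lhom_ext'
    intro w
    apply LinearMap.ext
    intro cc
    have h1 : FreeMonoid.toList (FreeMonoid.of i * w) = i :: FreeMonoid.toList w := rfl
    simp only [LinearMap.comp_apply, MonoidAlgebra.lsingle_apply, LinearMap.mulLeft_apply,
      gen_mul_single, TL, mkL_single, h1]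
    by_cases hij : i = j
    · subst hij
      simp [Tword, wordElt_eq, FreeMonoid.ofList_toList, MonoidAlgebra.smul_single']
    · simp [Tword, hij]
  have h2 := LinearMap.congr_fun h x
  simp only [LinearMap.comp_apply, LinearMap.mulLeft_apply] at h2
  rw [h2]
  by_cases hij : i = j <;> simp [hij]

lemma key_lin (j : α) :
    cycDerL j ∘ₗ SL + VL (α := α) j ∘ₗ RL = TL j + VL j := by
  apply MonoidAlgebra.lhom_ext'
  intro w
  apply LinearMap.ext
  intro cc
  have hrot : FreeMonoid.toList (rotW w) = (FreeMonoid.toList w).rotate 1 := rfl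
  simp only [LinearMap.add_apply, LinearMap.comp_apply, MonoidAlgebra.lsingle_apply,
    SL, RL, TL, VL, cycDerL, mkL_single, map_smul, hrot, one_smul]
  rw [← smul_add, ← smul_add]
  exact congrArg (fun y => cc • y) (key_word j (FreeMonoid.toList w))

end NCP



/-!
STATEMENT 4 (noncommutative Poincaré lemma). If `f₁,…,fₙ ∈ F = ℂ⟨x₁,…,xₙ⟩` satisfy
`Σ_i [x_i, f_i] = 0`, then there is a potential `Φ ∈ F_cyc` with `f_i = ∂Φ/∂x_i` for all `i`. -/
theorem noncommutative_poincare_lemma (n : ℕ) (f : Fin n → FA (Fin n))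
    (hf : ∑ i : Fin n, (gen i * f i - f i * gen i) = 0) :
    ∃ Φ : FA (Fin n), ∀ i : Fin n, f i = cycDer i Φ := by
  classical
  set G : FA (Fin n) := ∑ i, gen i * f i with hG
  have hsum : ∑ i : Fin n, gen i * f i = ∑ i : Fin n, f i * gen i := by
    rw [← sub_eq_zero, ← Finset.sum_sub_distrib]
    exact hf
  have hR : NCP.RL G = G := by
    rw [hG, map_sum]
    simp_rw [NCP.RL_gen_mul]
    exact hsum.symm
  refine ⟨NCP.SL G, fun j => ?_⟩
  have hT : NCP.TL j G = f j := by
    rw [hG, map_sum]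
    simp_rw [NCP.TL_gen_mul]
    simp
  have h2 := LinearMap.congr_fun (NCP.key_lin (α := Fin n) j) G
  simp only [LinearMap.add_apply, LinearMap.comp_apply, hR] at h2
  have h3 : NCP.cycDerL j (NCP.SL G) = NCP.TL j G := by
    exact add_right_cancel h2
  rw [NCP.cycDer_eq, h3, hT]
end
end

section
/- Let Q be the quiver with two vertices and two arrows x₁, x₂ from vertex 1 to vertex 2, and let Q̄ be its double, with reverse arrows x₁*, x₂*. Let Φ = x₁x₁*x₂x₂* − x₁*x₁x₂*x₂ ∈ (ℂQ̄)_cyc. Then the center of the conifold algebra A = 𝔄(ℂQ̄, Φ) is generated by four elements satisfying a single quadratic relation, so that Spec Z(A) is a quadric cone in ℂ⁴. -/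
open scoped BigOperators

noncomputable section

/-- The relation `s ∼ 0` for `s ∈ S`; `RingQuot (idealRel S)` is the quotient of the
free algebra by the two-sided ideal generated by `S`. -/
def idealRel {α : Type} (S : Set (FA α)) : FA α → FA α → Prop :=
  fun a b => a ∈ S ∧ b = 0


/-!
STATEMENT 15 (conifold algebra). `Q` has two vertices and two arrows `x₁, x₂ : 1 → 2`; `Q̄`
has in addition the reversed arrows `x₁*, x₂* : 2 → 1`; and
`Φ = x₁x₁*x₂x₂* − x₁*x₁x₂*x₂`.  The center of the conifold algebra `A = 𝔄(ℂQ̄, Φ)` is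
generated by four elements subject to one (homogeneous) quadratic relation, so `Spec Z(A)`
is a quadric cone in `ℂ⁴`.

The path algebra `ℂQ̄` is presented on generators `e₁ = gen 0`, `e₂ = gen 1` (vertex
idempotents), `x₁ = gen 2`, `x₂ = gen 3`, `x₁* = gen 4`, `x₂* = gen 5`, subject to the
standard relations `e₁ + e₂ = 1`, `eᵢeⱼ = δᵢⱼeᵢ`, `a = e_{t(a)}·a·e_{s(a)}`, together with
the relations `∂Φ/∂a = 0` for all arrows `a` of `Q̄`.
-/

/-- The conifold potential `Φ = x₁x₁*x₂x₂* − x₁*x₁x₂*x₂`. -/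
def conifoldPotential : FA (Fin 6) :=
  wordElt [2, 4, 3, 5] - wordElt [4, 2, 5, 3]

/-- Presentation of the conifold algebra `𝔄(ℂQ̄, Φ)`. -/
def conifoldRels : Set (FA (Fin 6)) :=
  {gen 0 + gen 1 - 1,
   gen 0 * gen 0 - gen 0, gen 1 * gen 1 - gen 1,
   gen 0 * gen 1, gen 1 * gen 0,
   gen 2 - gen 1 * gen 2 * gen 0, gen 3 - gen 1 * gen 3 * gen 0,
   gen 4 - gen 0 * gen 4 * gen 1, gen 5 - gen 0 * gen 5 * gen 1,
   cycDer (2 : Fin 6) conifoldPotential, cycDer (3 : Fin 6) conifoldPotential,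
   cycDer (4 : Fin 6) conifoldPotential, cycDer (5 : Fin 6) conifoldPotential}

/-- The conifold algebra `A = 𝔄(ℂQ̄, Φ)`. -/
abbrev ConifoldAlgebra : Type := RingQuot (idealRel conifoldRels)


namespace Conifold

lemma wordElt_nil : wordElt ([] : List (Fin 6)) = 1 := rfl
lemma wordElt_cons (a : Fin 6) (l : List (Fin 6)) :
    wordElt (a :: l) = gen a * wordElt l := by
  have : FreeMonoid.ofList (a :: l) = FreeMonoid.of a * FreeMonoid.ofList l := rfl
  rw [wordElt, this, map_mul]; rfl
lemma cycDer_sub (j : Fin 6) (f g : FA (Fin 6)) :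
    cycDer j (f - g) = cycDer j f - cycDer j g := by
  unfold cycDer
  rw [MonoidAlgebra.coeff_sub, Finsupp.sum_sub_index]
  intro a b₁ b₂
  exact sub_smul b₁ b₂ _
lemma cycDer_wordElt (j : Fin 6) (w : List (Fin 6)) :
    cycDer j (wordElt w) = cycDerWord j w := by
  unfold cycDer
  rw [wordElt, MonoidAlgebra.of_apply, MonoidAlgebra.coeff_single, Finsupp.sum_single_index]
  · simp
  · simp
lemma cycDer2 : cycDer (2 : Fin 6) conifoldPotential
    = wordElt [4,3,5] - wordElt [5,3,4] := by
  rw [conifoldPotential, cycDer_sub, cycDer_wordElt, cycDer_wordElt,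
    cycDerWord, cycDerWord, (by decide : splits (2 : Fin 6) [2,4,3,5] = [([], [4,3,5])]),
    (by decide : splits (2 : Fin 6) [4,2,5,3] = [([4], [5,3])])]
  simp
lemma cycDer3 : cycDer (3 : Fin 6) conifoldPotential
    = wordElt [5,2,4] - wordElt [4,2,5] := by
  rw [conifoldPotential, cycDer_sub, cycDer_wordElt, cycDer_wordElt,
    cycDerWord, cycDerWord, (by decide : splits (3 : Fin 6) [2,4,3,5] = [([2,4], [5])]),
    (by decide : splits (3 : Fin 6) [4,2,5,3] = [([4,2,5], [])])]
  simp
lemma cycDer4 : cycDer (4 : Fin 6) conifoldPotential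
    = wordElt [3,5,2] - wordElt [2,5,3] := by
  rw [conifoldPotential, cycDer_sub, cycDer_wordElt, cycDer_wordElt,
    cycDerWord, cycDerWord, (by decide : splits (4 : Fin 6) [2,4,3,5] = [([2], [3,5])]),
    (by decide : splits (4 : Fin 6) [4,2,5,3] = [([], [2,5,3])])]
  simp
lemma cycDer5 : cycDer (5 : Fin 6) conifoldPotential
    = wordElt [2,4,3] - wordElt [3,4,2] := by
  rw [conifoldPotential, cycDer_sub, cycDer_wordElt, cycDer_wordElt,
    cycDerWord, cycDerWord, (by decide : splits (5 : Fin 6) [2,4,3,5] = [([2,4,3], [])]),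
    (by decide : splits (5 : Fin 6) [4,2,5,3] = [([4,2], [3])])]
  simp

abbrev A : Type := ConifoldAlgebra

def mk : FA (Fin 6) →ₐ[ℂ] A := RingQuot.mkAlgHom ℂ (idealRel conifoldRels)

lemma mk_rel {r : FA (Fin 6)} (hr : r ∈ conifoldRels) : mk r = 0 := by
  have h : idealRel conifoldRels r 0 := ⟨hr, rfl⟩
  have := RingQuot.mkAlgHom_rel ℂ h
  simpa [mk] using this

def e1 : A := mk (gen 0)
def e2 : A := mk (gen 1)
def x : Fin 2 → A := ![mk (gen 2), mk (gen 3)]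
def y : Fin 2 → A := ![mk (gen 4), mk (gen 5)]

lemma rel_e : e1 + e2 = 1 := by
  have := mk_rel (show gen 0 + gen 1 - 1 ∈ conifoldRels by simp [conifoldRels])
  simp only [map_sub, map_add, map_one] at this
  rw [e1, e2]; linear_combination (norm := noncomm_ring) this

lemma rel_e11 : e1 * e1 = e1 := by
  have := mk_rel (show gen 0 * gen 0 - gen 0 ∈ conifoldRels by simp [conifoldRels])
  simp only [map_sub, map_mul] at this
  rw [e1]; linear_combination (norm := noncomm_ring) this

lemma rel_e22 : e2 * e2 = e2 := by
  have := mk_rel (show gen 1 * gen 1 - gen 1 ∈ conifoldRels by simp [conifoldRels])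
  simp only [map_sub, map_mul] at this
  rw [e2]; linear_combination (norm := noncomm_ring) this

lemma rel_e12 : e1 * e2 = 0 := by
  have := mk_rel (show gen 0 * gen 1 ∈ conifoldRels by simp [conifoldRels])
  simp only [map_mul] at this
  rw [e1, e2]; linear_combination (norm := noncomm_ring) this

lemma rel_e21 : e2 * e1 = 0 := by
  have := mk_rel (show gen 1 * gen 0 ∈ conifoldRels by simp [conifoldRels])
  simp only [map_mul] at this
  rw [e2, e1]; linear_combination (norm := noncomm_ring) this

lemma rel_x (i : Fin 2) : x i = e2 * x i * e1 := by
  fin_cases i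
  · have := mk_rel (show gen 2 - gen 1 * gen 2 * gen 0 ∈ conifoldRels by simp [conifoldRels])
    simp only [map_sub, map_mul] at this
    show mk (gen 2) = e2 * mk (gen 2) * e1
    rw [e2, e1]; linear_combination (norm := noncomm_ring) this
  · have := mk_rel (show gen 3 - gen 1 * gen 3 * gen 0 ∈ conifoldRels by simp [conifoldRels])
    simp only [map_sub, map_mul] at this
    show mk (gen 3) = e2 * mk (gen 3) * e1
    rw [e2, e1]; linear_combination (norm := noncomm_ring) this

lemma rel_y (i : Fin 2) : y i = e1 * y i * e2 := by
  fin_cases i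
  · have := mk_rel (show gen 4 - gen 0 * gen 4 * gen 1 ∈ conifoldRels by simp [conifoldRels])
    simp only [map_sub, map_mul] at this
    show mk (gen 4) = e1 * mk (gen 4) * e2
    rw [e2, e1]; linear_combination (norm := noncomm_ring) this
  · have := mk_rel (show gen 5 - gen 0 * gen 5 * gen 1 ∈ conifoldRels by simp [conifoldRels])
    simp only [map_sub, map_mul] at this
    show mk (gen 5) = e1 * mk (gen 5) * e2
    rw [e2, e1]; linear_combination (norm := noncomm_ring) this

lemma mk_word3 (a b c : Fin 6) :
    mk (wordElt [a,b,c]) = mk (gen a) * mk (gen b) * mk (gen c) := by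
  simp only [wordElt_cons, wordElt_nil, mul_one, map_mul, mul_assoc]


-- cubic relations from the potential
lemma rel_h2 : y 0 * x 1 * y 1 = y 1 * x 1 * y 0 := by
  have h := mk_rel (show cycDer (2 : Fin 6) conifoldPotential ∈ conifoldRels by
    simp [conifoldRels])
  rw [cycDer2, map_sub, mk_word3, mk_word3] at h
  show mk (gen 4) * mk (gen 3) * mk (gen 5) = mk (gen 5) * mk (gen 3) * mk (gen 4)
  linear_combination (norm := noncomm_ring) h

lemma rel_h3 : y 1 * x 0 * y 0 = y 0 * x 0 * y 1 := by
  have h := mk_rel (show cycDer (3 : Fin 6) conifoldPotential ∈ conifoldRels by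
    simp [conifoldRels])
  rw [cycDer3, map_sub, mk_word3, mk_word3] at h
  show mk (gen 5) * mk (gen 2) * mk (gen 4) = mk (gen 4) * mk (gen 2) * mk (gen 5)
  linear_combination (norm := noncomm_ring) h

lemma rel_h4 : x 1 * y 1 * x 0 = x 0 * y 1 * x 1 := by
  have h := mk_rel (show cycDer (4 : Fin 6) conifoldPotential ∈ conifoldRels by
    simp [conifoldRels])
  rw [cycDer4, map_sub, mk_word3, mk_word3] at h
  show mk (gen 3) * mk (gen 5) * mk (gen 2) = mk (gen 2) * mk (gen 5) * mk (gen 3)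
  linear_combination (norm := noncomm_ring) h

lemma rel_h5 : x 0 * y 0 * x 1 = x 1 * y 0 * x 0 := by
  have h := mk_rel (show cycDer (5 : Fin 6) conifoldPotential ∈ conifoldRels by
    simp [conifoldRels])
  rw [cycDer5, map_sub, mk_word3, mk_word3] at h
  show mk (gen 2) * mk (gen 4) * mk (gen 3) = mk (gen 3) * mk (gen 4) * mk (gen 2)
  linear_combination (norm := noncomm_ring) h

lemma rel_ysym (j k j' : Fin 2) : y j * x k * y j' = y j' * x k * y j := by
  fin_cases j <;> fin_cases k <;> fin_cases j'
  · rfl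
  · exact rel_h3.symm
  · rfl
  · exact rel_h2
  · exact rel_h3
  · rfl
  · exact rel_h2.symm
  · rfl

lemma rel_xsym (i k i' : Fin 2) : x i * y k * x i' = x i' * y k * x i := by
  fin_cases i <;> fin_cases k <;> fin_cases i'
  · rfl
  · exact rel_h5
  · rfl
  · exact rel_h4.symm
  · exact rel_h5.symm
  · rfl
  · exact rel_h4
  · rfl

end Conifold
namespace Conifold

-- absorption rules
lemma x_e1 (i : Fin 2) : x i * e1 = x i := by
  conv_lhs => rw [rel_x i]
  rw [mul_assoc, mul_assoc, rel_e11, ← mul_assoc, ← rel_x]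
lemma e2_x (i : Fin 2) : e2 * x i = x i := by
  conv_lhs => rw [rel_x i]
  rw [← mul_assoc, ← mul_assoc, rel_e22, ← rel_x]
lemma e1_x (i : Fin 2) : e1 * x i = 0 := by
  conv_lhs => rw [rel_x i, ← mul_assoc, ← mul_assoc, rel_e12, zero_mul, zero_mul]
lemma x_e2 (i : Fin 2) : x i * e2 = 0 := by
  conv_lhs => rw [rel_x i, mul_assoc, mul_assoc, rel_e12, mul_zero, mul_zero]
lemma y_e2 (i : Fin 2) : y i * e2 = y i := by
  conv_lhs => rw [rel_y i]
  rw [mul_assoc, mul_assoc, rel_e22, ← mul_assoc, ← rel_y]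
lemma e1_y (i : Fin 2) : e1 * y i = y i := by
  conv_lhs => rw [rel_y i]
  rw [← mul_assoc, ← mul_assoc, rel_e11, ← rel_y]
lemma e2_y (i : Fin 2) : e2 * y i = 0 := by
  conv_lhs => rw [rel_y i, ← mul_assoc, ← mul_assoc, rel_e21, zero_mul, zero_mul]
lemma y_e1 (i : Fin 2) : y i * e1 = 0 := by
  conv_lhs => rw [rel_y i, mul_assoc, mul_assoc, rel_e21, mul_zero, mul_zero]
lemma xx (i j : Fin 2) : x i * x j = 0 := by
  rw [← e2_x j, ← mul_assoc, x_e2, zero_mul]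
lemma yy (i j : Fin 2) : y i * y j = 0 := by
  rw [← e1_y j, ← mul_assoc, y_e1, zero_mul]

/-- index bookkeeping: variable `k : Fin 4` corresponds to the pair `(iv k, jv k)`. -/
def iv : Fin 4 → Fin 2 := ![0, 0, 1, 1]
def jv : Fin 4 → Fin 2 := ![0, 1, 0, 1]
def kv : Fin 2 → Fin 2 → Fin 4 := fun i j => ![![0,1],![2,3]] i j
lemma iv_kv (i j : Fin 2) : iv (kv i j) = i := by fin_cases i <;> fin_cases j <;> rfl
lemma jv_kv (i j : Fin 2) : jv (kv i j) = j := by fin_cases i <;> fin_cases j <;> rfl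

def z : Fin 4 → A := fun k => y (jv k) * x (iv k)
def w : Fin 4 → A := fun k => x (iv k) * y (jv k)
def c : Fin 4 → A := fun k => z k + w k

lemma e1_z (k : Fin 4) : e1 * z k = z k := by rw [z, ← mul_assoc, e1_y]
lemma z_e1 (k : Fin 4) : z k * e1 = z k := by rw [z, mul_assoc, x_e1]
lemma e2_z (k : Fin 4) : e2 * z k = 0 := by rw [z, ← mul_assoc, e2_y, zero_mul]
lemma z_e2 (k : Fin 4) : z k * e2 = 0 := by rw [z, mul_assoc, x_e2, mul_zero]
lemma e2_w (k : Fin 4) : e2 * w k = w k := by rw [w, ← mul_assoc, e2_x]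
lemma w_e2 (k : Fin 4) : w k * e2 = w k := by rw [w, mul_assoc, y_e2]
lemma e1_w (k : Fin 4) : e1 * w k = 0 := by rw [w, ← mul_assoc, e1_x, zero_mul]
lemma w_e1 (k : Fin 4) : w k * e1 = 0 := by rw [w, mul_assoc, y_e1, mul_zero]
lemma zw (k l : Fin 4) : z k * w l = 0 := by
  rw [z, w, mul_assoc, ← mul_assoc (x (iv k)), xx, zero_mul, mul_zero]
lemma wz (k l : Fin 4) : w k * z l = 0 := by
  rw [w, z, mul_assoc, ← mul_assoc (y (jv k)), yy, zero_mul, mul_zero]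

lemma zz (k l : Fin 4) : z k * z l = z l * z k := by
  rw [z, z]
  calc y (jv k) * x (iv k) * (y (jv l) * x (iv l))
      = y (jv k) * x (iv k) * y (jv l) * x (iv l) := by simp only [mul_assoc]
    _ = y (jv l) * x (iv k) * y (jv k) * x (iv l) := by rw [rel_ysym]
    _ = y (jv l) * (x (iv k) * y (jv k) * x (iv l)) := by
        simp only [mul_assoc]
    _ = y (jv l) * (x (iv l) * y (jv k) * x (iv k)) := by rw [rel_xsym]
    _ = y (jv l) * x (iv l) * (y (jv k) * x (iv k)) := by simp only [mul_assoc]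

lemma ww (k l : Fin 4) : w k * w l = w l * w k := by
  rw [w, w]
  calc x (iv k) * y (jv k) * (x (iv l) * y (jv l))
      = x (iv k) * y (jv k) * x (iv l) * y (jv l) := by simp only [mul_assoc]
    _ = x (iv l) * y (jv k) * x (iv k) * y (jv l) := by rw [rel_xsym]
    _ = x (iv l) * (y (jv k) * x (iv k) * y (jv l)) := by simp only [mul_assoc]
    _ = x (iv l) * (y (jv l) * x (iv k) * y (jv k)) := by rw [rel_ysym]
    _ = x (iv l) * y (jv l) * (x (iv k) * y (jv k)) := by simp only [mul_assoc]

-- the quadric vanishes on z and on w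
lemma z_det : z 0 * z 3 = z 1 * z 2 := by
  show y 0 * x 0 * (y 1 * x 1) = y 1 * x 0 * (y 0 * x 1)
  calc y 0 * x 0 * (y 1 * x 1) = y 0 * x 0 * y 1 * x 1 := by simp only [mul_assoc]
    _ = y 1 * x 0 * y 0 * x 1 := by rw [rel_ysym]
    _ = y 1 * x 0 * (y 0 * x 1) := by simp only [mul_assoc]

lemma w_det : w 0 * w 3 = w 1 * w 2 := by
  show x 0 * y 0 * (x 1 * y 1) = x 0 * y 1 * (x 1 * y 0)
  calc x 0 * y 0 * (x 1 * y 1) = x 0 * (y 0 * x 1 * y 1) := by simp only [mul_assoc]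
    _ = x 0 * (y 1 * x 1 * y 0) := by rw [rel_ysym]
    _ = x 0 * y 1 * (x 1 * y 0) := by simp only [mul_assoc]

lemma yx (i j : Fin 2) : y i * x j = z (kv j i) := by rw [z, iv_kv, jv_kv]
lemma xy (i j : Fin 2) : x i * y j = w (kv i j) := by rw [w, iv_kv, jv_kv]
end Conifold
namespace Conifold
open MvPolynomial

abbrev P4 := MvPolynomial (Fin 4) ℂ

/-- The quadric `q = X₀X₃ - X₁X₂`. -/
def qPoly : P4 := X 0 * X 3 - X 1 * X 2

def CZ : Subalgebra ℂ A := Algebra.adjoin ℂ (Set.range z)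
def CW : Subalgebra ℂ A := Algebra.adjoin ℂ (Set.range w)

instance : CommRing CZ := Algebra.adjoinCommRingOfComm ℂ (by
  rintro a ⟨k, rfl⟩ b ⟨l, rfl⟩; exact zz k l)
instance : CommRing CW := Algebra.adjoinCommRingOfComm ℂ (by
  rintro a ⟨k, rfl⟩ b ⟨l, rfl⟩; exact ww k l)

def zP : P4 →ₐ[ℂ] A :=
  (CZ.val).comp (@aeval ℂ CZ (Fin 4) _ _ CZ.algebra fun k => (⟨z k, Algebra.subset_adjoin ⟨k, rfl⟩⟩ : CZ))
def wP : P4 →ₐ[ℂ] A :=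
  (CW.val).comp (@aeval ℂ CW (Fin 4) _ _ CW.algebra fun k => (⟨w k, Algebra.subset_adjoin ⟨k, rfl⟩⟩ : CW))

lemma zP_X (k : Fin 4) : zP (X k) = z k :=
  congrArg Subtype.val (@aeval_X ℂ CZ (Fin 4) _ _ CZ.algebra _ k)
lemma wP_X (k : Fin 4) : wP (X k) = w k :=
  congrArg Subtype.val (@aeval_X ℂ CW (Fin 4) _ _ CW.algebra _ k)

lemma commute_zP {a : A} (h : ∀ k, Commute a (z k)) (p : P4) : Commute a (zP p) := by
  induction p using MvPolynomial.induction_on with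
  | C r =>
      have : zP (C r) = algebraMap ℂ A r := by simp [zP, algebraMap_eq]
      rw [this]; exact (Algebra.commutes r a).symm
  | add p q hp hq => rw [map_add]; exact hp.add_right hq
  | mul_X p k hp => rw [map_mul, zP_X]; exact hp.mul_right (h k)

lemma commute_wP {a : A} (h : ∀ k, Commute a (w k)) (p : P4) : Commute a (wP p) := by
  induction p using MvPolynomial.induction_on with
  | C r =>
      have : wP (C r) = algebraMap ℂ A r := by simp [wP, algebraMap_eq]
      rw [this]; exact (Algebra.commutes r a).symm
  | add p q hp hq => rw [map_add]; exact hp.add_right hq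
  | mul_X p k hp => rw [map_mul, wP_X]; exact hp.mul_right (h k)

lemma commute_e1_zP (p : P4) : Commute e1 (zP p) :=
  commute_zP (fun k => by rw [Commute, SemiconjBy, e1_z, z_e1]) p
lemma commute_e2_zP (p : P4) : Commute e2 (zP p) :=
  commute_zP (fun k => by rw [Commute, SemiconjBy, e2_z, z_e2]) p
lemma commute_e1_wP (p : P4) : Commute e1 (wP p) :=
  commute_wP (fun k => by rw [Commute, SemiconjBy, e1_w, w_e1]) p
lemma commute_e2_wP (p : P4) : Commute e2 (wP p) :=
  commute_wP (fun k => by rw [Commute, SemiconjBy, e2_w, w_e2]) p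
lemma commute_w_zP (l : Fin 4) (p : P4) : Commute (w l) (zP p) :=
  commute_zP (fun k => by rw [Commute, SemiconjBy, wz, zw]) p
lemma commute_z_wP (l : Fin 4) (p : P4) : Commute (z l) (wP p) :=
  commute_wP (fun k => by rw [Commute, SemiconjBy, zw, wz]) p

lemma zP_qPoly : zP qPoly = 0 := by
  rw [qPoly, map_sub, map_mul, map_mul, zP_X, zP_X, zP_X, zP_X, z_det, sub_self]
lemma wP_qPoly : wP qPoly = 0 := by
  rw [qPoly, map_sub, map_mul, map_mul, wP_X, wP_X, wP_X, wP_X, w_det, sub_self]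

lemma zP_span {p : P4} (hp : p ∈ Ideal.span {qPoly}) : zP p = 0 := by
  obtain ⟨t, rfl⟩ := Ideal.mem_span_singleton.mp hp
  rw [map_mul, zP_qPoly, zero_mul]
lemma wP_span {p : P4} (hp : p ∈ Ideal.span {qPoly}) : wP p = 0 := by
  obtain ⟨t, rfl⟩ := Ideal.mem_span_singleton.mp hp
  rw [map_mul, wP_qPoly, zero_mul]

-- centrality of c
lemma mk_gen_cases (i : Fin 6) :
    mk (gen i) = e1 ∨ mk (gen i) = e2 ∨ (∃ l, mk (gen i) = x l) ∨ ∃ l, mk (gen i) = y l := by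
  fin_cases i
  · exact Or.inl rfl
  · exact Or.inr (Or.inl rfl)
  · exact Or.inr (Or.inr (Or.inl ⟨0, rfl⟩))
  · exact Or.inr (Or.inr (Or.inl ⟨1, rfl⟩))
  · exact Or.inr (Or.inr (Or.inr ⟨0, rfl⟩))
  · exact Or.inr (Or.inr (Or.inr ⟨1, rfl⟩))

lemma commute_c_x (k : Fin 4) (l : Fin 2) : Commute (c k) (x l) := by
  rw [Commute, SemiconjBy, c, z, w]
  calc (y (jv k) * x (iv k) + x (iv k) * y (jv k)) * x l
      = y (jv k) * (x (iv k) * x l) + x (iv k) * y (jv k) * x l := by noncomm_ring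
    _ = x (iv k) * y (jv k) * x l := by rw [xx, mul_zero, zero_add]
    _ = x l * y (jv k) * x (iv k) := rel_xsym _ _ _
    _ = x l * (y (jv k) * x (iv k) + x (iv k) * y (jv k)) := by
        rw [mul_add, ← mul_assoc]
        nth_rewrite 1 [show x l * (x (iv k) * y (jv k)) = 0 by
          rw [← mul_assoc, xx, zero_mul]]
        rw [add_zero]

lemma commute_c_y (k : Fin 4) (l : Fin 2) : Commute (c k) (y l) := by
  rw [Commute, SemiconjBy, c, z, w]
  calc (y (jv k) * x (iv k) + x (iv k) * y (jv k)) * y l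
      = y (jv k) * x (iv k) * y l + x (iv k) * (y (jv k) * y l) := by noncomm_ring
    _ = y (jv k) * x (iv k) * y l := by rw [yy, mul_zero, add_zero]
    _ = y l * x (iv k) * y (jv k) := rel_ysym _ _ _
    _ = y l * (y (jv k) * x (iv k) + x (iv k) * y (jv k)) := by
        rw [mul_add]
        rw [show y l * (y (jv k) * x (iv k)) = 0 by rw [← mul_assoc, yy, zero_mul]]
        rw [zero_add, ← mul_assoc]

lemma commute_c_e1 (k : Fin 4) : Commute (c k) e1 := by
  rw [c]
  exact Commute.add_left (by rw [Commute, SemiconjBy, z_e1, e1_z])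
    (by rw [Commute, SemiconjBy, w_e1, e1_w])

lemma commute_c_e2 (k : Fin 4) : Commute (c k) e2 := by
  rw [c]
  exact Commute.add_left (by rw [Commute, SemiconjBy, z_e2, e2_z])
    (by rw [Commute, SemiconjBy, w_e2, e2_w])

lemma mk_surj : Function.Surjective mk :=
  RingQuot.mkAlgHom_surjective ℂ (idealRel conifoldRels)

lemma commute_word {a : A} (h : ∀ i : Fin 6, Commute a (mk (gen i))) :
    ∀ l : List (Fin 6), Commute a (mk (wordElt l)) := by
  intro l
  induction l with
  | nil => rw [wordElt_nil, map_one]; exact Commute.one_right a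
  | cons i t ih => rw [wordElt_cons, map_mul]; exact (h i).mul_right ih

lemma central_of_commute_gens {a : A} (h : ∀ i : Fin 6, Commute a (mk (gen i))) :
    a ∈ Subalgebra.center ℂ A := by
  rw [Subalgebra.mem_center_iff]
  intro b
  obtain ⟨f, rfl⟩ := mk_surj b
  have : Commute a (mk f) := by
    induction f using MonoidAlgebra.induction_on with
    | of g =>
        have : MonoidAlgebra.of ℂ (FreeMonoid (Fin 6)) g = wordElt (FreeMonoid.toList g) := by
          rw [wordElt, FreeMonoid.ofList_toList]
        rw [this]
        exact commute_word h _
    | add f g hf hg => rw [map_add]; exact hf.add_right hg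
    | smul r f hf => rw [map_smul]; exact Commute.smul_right hf r
  exact this.symm

lemma c_central (k : Fin 4) : c k ∈ Subalgebra.center ℂ A := by
  apply central_of_commute_gens
  intro i
  rcases mk_gen_cases i with h | h | ⟨l, h⟩ | ⟨l, h⟩ <;> rw [h]
  · exact commute_c_e1 k
  · exact commute_c_e2 k
  · exact commute_c_x k l
  · exact commute_c_y k l

/-- The homomorphism `ψ` onto the center. -/
def psi : P4 →ₐ[ℂ] (Subalgebra.center ℂ A) :=
  aeval fun k => (⟨c k, c_central k⟩ : Subalgebra.center ℂ A)

lemma psi_coe (p : P4) : (psi p : A) = e1 * zP p + e2 * wP p := by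
  induction p using MvPolynomial.induction_on with
  | C r =>
      have h1 : psi (C r) = algebraMap ℂ _ r := by simp [psi, algebraMap_eq]
      have h2 : zP (C r) = algebraMap ℂ A r := by simp [zP, algebraMap_eq]
      have h3 : wP (C r) = algebraMap ℂ A r := by simp [wP, algebraMap_eq]
      rw [h1, h2, h3, ← Algebra.commutes r e1, ← Algebra.commutes r e2, ← mul_add, rel_e,
        mul_one]
      rfl
  | add p q hp hq =>
      rw [map_add, map_add, map_add, Subalgebra.coe_add, hp, hq]; noncomm_ring
  | mul_X p k hp =>
      rw [map_mul, map_mul, map_mul, Subalgebra.coe_mul, hp, zP_X, wP_X]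
      have hc : ((psi (X k) : Subalgebra.center ℂ A) : A) = z k + w k := by
        simp [psi, c]
      rw [hc]
      have t1 : e1 * zP p * w k = 0 := by
        rw [mul_assoc, ← (commute_w_zP k p).eq, ← mul_assoc, e1_w, zero_mul]
      have t2 : e2 * wP p * z k = 0 := by
        rw [mul_assoc, ← (commute_z_wP k p).eq, ← mul_assoc, e2_z, zero_mul]
      linear_combination (norm := noncomm_ring) t1 + t2

end Conifold
namespace Conifold
open MvPolynomial

def Bset : Set A :=
  {a | (∃ p, a = e1 * zP p) ∨ (∃ p, a = e2 * wP p) ∨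
       (∃ p i, a = x i * zP p) ∨ (∃ p i, a = y i * wP p)}

def V : Submodule ℂ A := Submodule.span ℂ Bset

lemma B1 (p : P4) : e1 * zP p ∈ Bset := Or.inl ⟨p, rfl⟩
lemma B2 (p : P4) : e2 * wP p ∈ Bset := Or.inr (Or.inl ⟨p, rfl⟩)
lemma B3 (p : P4) (i : Fin 2) : x i * zP p ∈ Bset := Or.inr (Or.inr (Or.inl ⟨p, i, rfl⟩))
lemma B4 (p : P4) (i : Fin 2) : y i * wP p ∈ Bset := Or.inr (Or.inr (Or.inr ⟨p, i, rfl⟩))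

lemma gen_mul_B (i : Fin 6) {b : A} (hb : b ∈ Bset) : mk (gen i) * b ∈ V := by
  rcases mk_gen_cases i with h | h | ⟨l, h⟩ | ⟨l, h⟩ <;> rw [h] <;>
    rcases hb with ⟨p, rfl⟩ | ⟨p, rfl⟩ | ⟨p, j, rfl⟩ | ⟨p, j, rfl⟩
  · rw [← mul_assoc, rel_e11]; exact Submodule.subset_span (B1 p)
  · rw [← mul_assoc, rel_e12, zero_mul]; exact V.zero_mem
  · rw [← mul_assoc, e1_x, zero_mul]; exact V.zero_mem
  · rw [← mul_assoc, e1_y]; exact Submodule.subset_span (B4 p j)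
  · rw [← mul_assoc, rel_e21, zero_mul]; exact V.zero_mem
  · rw [← mul_assoc, rel_e22]; exact Submodule.subset_span (B2 p)
  · rw [← mul_assoc, e2_x]; exact Submodule.subset_span (B3 p j)
  · rw [← mul_assoc, e2_y, zero_mul]; exact V.zero_mem
  · rw [← mul_assoc, x_e1]; exact Submodule.subset_span (B3 p l)
  · rw [← mul_assoc, x_e2, zero_mul]; exact V.zero_mem
  · rw [← mul_assoc, xx, zero_mul]; exact V.zero_mem
  · -- x l * (y j * wP p) = e2 * wP (X (kv l j) * p)
    rw [← mul_assoc, xy]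
    have : w (kv l j) * wP p = e2 * wP (X (kv l j) * p) := by
      rw [map_mul, wP_X, ← mul_assoc, e2_w]
    rw [this]; exact Submodule.subset_span (B2 _)
  · rw [← mul_assoc, y_e1, zero_mul]; exact V.zero_mem
  · rw [← mul_assoc, y_e2]; exact Submodule.subset_span (B4 p l)
  · rw [← mul_assoc, yx]
    have : z (kv j l) * zP p = e1 * zP (X (kv j l) * p) := by
      rw [map_mul, zP_X, ← mul_assoc, e1_z]
    rw [this]; exact Submodule.subset_span (B1 _)
  · rw [← mul_assoc, yy, zero_mul]; exact V.zero_mem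

lemma gen_mul_V (i : Fin 6) {v : A} (hv : v ∈ V) : mk (gen i) * v ∈ V := by
  induction hv using Submodule.span_induction with
  | mem b hb => exact gen_mul_B i hb
  | zero => rw [mul_zero]; exact V.zero_mem
  | add a b _ _ ha hb => rw [mul_add]; exact V.add_mem ha hb
  | smul r a _ ha => rw [mul_smul_comm]; exact V.smul_mem r ha

lemma one_mem_V : (1 : A) ∈ V := by
  have h1 : e1 = e1 * zP 1 := by rw [map_one, mul_one]
  have h2 : e2 = e2 * wP 1 := by rw [map_one, mul_one]
  rw [← rel_e, h1, h2]
  exact V.add_mem (Submodule.subset_span (B1 1)) (Submodule.subset_span (B2 1))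

lemma word_mem_V (l : List (Fin 6)) : mk (wordElt l) ∈ V := by
  induction l with
  | nil => rw [wordElt_nil, map_one]; exact one_mem_V
  | cons i t ih => rw [wordElt_cons, map_mul]; exact gen_mul_V i ih

lemma mem_V (a : A) : a ∈ V := by
  obtain ⟨f, rfl⟩ := mk_surj a
  induction f using MonoidAlgebra.induction_on with
  | of g =>
      have : MonoidAlgebra.of ℂ (FreeMonoid (Fin 6)) g = wordElt (FreeMonoid.toList g) := by
        rw [wordElt, FreeMonoid.ofList_toList]
      rw [this]; exact word_mem_V _
  | add f g hf hg => rw [map_add]; exact V.add_mem hf hg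
  | smul r f hf => rw [map_smul]; exact V.smul_mem r hf

lemma corner_B {b : A} (hb : b ∈ Bset) :
    ∃ p₁ p₂ : P4, e1 * b * e1 = e1 * zP p₁ ∧ e2 * b * e2 = e2 * wP p₂ := by
  rcases hb with ⟨p, rfl⟩ | ⟨p, rfl⟩ | ⟨p, j, rfl⟩ | ⟨p, j, rfl⟩
  · refine ⟨p, 0, ?_, ?_⟩
    · rw [← mul_assoc, rel_e11, mul_assoc, ← (commute_e1_zP p).eq, ← mul_assoc, rel_e11]
    · rw [← mul_assoc, rel_e21, zero_mul, zero_mul, map_zero, mul_zero]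
  · refine ⟨0, p, ?_, ?_⟩
    · rw [← mul_assoc, rel_e12, zero_mul, zero_mul, map_zero, mul_zero]
    · rw [← mul_assoc, rel_e22, mul_assoc, ← (commute_e2_wP p).eq, ← mul_assoc, rel_e22]
  · refine ⟨0, 0, ?_, ?_⟩
    · rw [← mul_assoc, e1_x, zero_mul, zero_mul, map_zero, mul_zero]
    · rw [mul_assoc, mul_assoc, ← (commute_e2_zP p).eq, ← mul_assoc, ← mul_assoc, e2_x,
        x_e2, zero_mul, map_zero, mul_zero]
  · refine ⟨0, 0, ?_, ?_⟩
    · rw [mul_assoc, mul_assoc, ← (commute_e1_wP p).eq, ← mul_assoc, ← mul_assoc, e1_y,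
        y_e1, zero_mul, map_zero, mul_zero]
    · rw [← mul_assoc, e2_y, zero_mul, zero_mul, map_zero, mul_zero]

lemma corner_V {v : A} (hv : v ∈ V) :
    ∃ p₁ p₂ : P4, e1 * v * e1 = e1 * zP p₁ ∧ e2 * v * e2 = e2 * wP p₂ := by
  induction hv using Submodule.span_induction with
  | mem b hb => exact corner_B hb
  | zero => exact ⟨0, 0, by simp, by simp⟩
  | add a b _ _ ha hb =>
      obtain ⟨p₁, p₂, h1, h2⟩ := ha
      obtain ⟨q₁, q₂, g1, g2⟩ := hb
      refine ⟨p₁ + q₁, p₂ + q₂, ?_, ?_⟩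
      · rw [mul_add, add_mul, h1, g1, map_add, mul_add]
      · rw [mul_add, add_mul, h2, g2, map_add, mul_add]
  | smul r a _ ha =>
      obtain ⟨p₁, p₂, h1, h2⟩ := ha
      refine ⟨r • p₁, r • p₂, ?_, ?_⟩
      · rw [mul_smul_comm, smul_mul_assoc, h1, map_smul, mul_smul_comm]
      · rw [mul_smul_comm, smul_mul_assoc, h2, map_smul, mul_smul_comm]

lemma central_decomp {t : A} (ht : t ∈ Subalgebra.center ℂ A) :
    ∃ p₁ p₂ : P4, t = e1 * zP p₁ + e2 * wP p₂ := by
  obtain ⟨p₁, p₂, h1, h2⟩ := corner_V (mem_V t)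
  refine ⟨p₁, p₂, ?_⟩
  have hc := Subalgebra.mem_center_iff.mp ht
  have h12 : e1 * t * e2 = 0 := by rw [mul_assoc, ← hc e2, ← mul_assoc, rel_e12, zero_mul]
  have h21 : e2 * t * e1 = 0 := by rw [mul_assoc, ← hc e1, ← mul_assoc, rel_e21, zero_mul]
  calc t = 1 * t * 1 := by rw [one_mul, mul_one]
    _ = (e1 + e2) * t * (e1 + e2) := by rw [rel_e]
    _ = e1 * t * e1 + e1 * t * e2 + (e2 * t * e1 + e2 * t * e2) := by noncomm_ring
    _ = e1 * zP p₁ + e2 * wP p₂ := by rw [h1, h2, h12, h21, add_zero, zero_add]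

end Conifold
namespace Conifold
open MvPolynomial

abbrev MatB := Matrix (Fin 2) (Fin 2) P4

def mats : Fin 6 → MatB :=
  ![!![1,0;0,0], !![0,0;0,1], !![0,0;X 0,0], !![0,0;X 1,0], !![0,X 2;0,0], !![0,X 3;0,0]]

def rho0 : FA (Fin 6) →ₐ[ℂ] MatB :=
  MonoidAlgebra.lift ℂ MatB (FreeMonoid (Fin 6)) (FreeMonoid.lift mats)

lemma rho0_gen (i : Fin 6) : rho0 (gen i) = mats i := by
  rw [rho0, gen, MonoidAlgebra.lift_of, FreeMonoid.lift_eval_of]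

lemma mats_0 : mats 0 = !![1,0;0,0] := rfl
lemma mats_1 : mats 1 = !![0,0;0,1] := rfl
lemma mats_2 : mats 2 = !![0,0;X 0,0] := rfl
lemma mats_3 : mats 3 = !![0,0;X 1,0] := rfl
lemma mats_4 : mats 4 = !![0,X 2;0,0] := rfl
lemma mats_5 : mats 5 = !![0,X 3;0,0] := rfl

lemma rho0_word3 (a b c : Fin 6) :
    rho0 (wordElt [a,b,c]) = mats a * (mats b * mats c) := by
  simp only [wordElt_cons, wordElt_nil, mul_one, map_mul, rho0_gen]

set_option maxHeartbeats 1000000 in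
lemma rho0_rel : ∀ ⦃a b : FA (Fin 6)⦄, idealRel conifoldRels a b → rho0 a = rho0 b := by
  rintro a b ⟨ha, rfl⟩
  rw [map_zero]
  simp only [conifoldRels, Set.mem_insert_iff, Set.mem_singleton_iff] at ha
  rcases ha with rfl|rfl|rfl|rfl|rfl|rfl|rfl|rfl|rfl|rfl|rfl|rfl|rfl
  · simp only [map_sub, map_add, map_one, rho0_gen]
    refine Matrix.ext fun i j => ?_
    fin_cases i <;> fin_cases j <;>
      simp [mats_0, mats_1, mats_2, mats_3, mats_4, mats_5, Matrix.one_apply,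
        Matrix.mul_apply, Fin.sum_univ_two]
  · simp only [map_sub, map_mul, rho0_gen]
    refine Matrix.ext fun i j => ?_
    fin_cases i <;> fin_cases j <;>
      simp [mats_0, mats_1, mats_2, mats_3, mats_4, mats_5,
        Matrix.mul_apply, Fin.sum_univ_two]
  · simp only [map_sub, map_mul, rho0_gen]
    refine Matrix.ext fun i j => ?_
    fin_cases i <;> fin_cases j <;>
      simp [mats_0, mats_1, mats_2, mats_3, mats_4, mats_5,
        Matrix.mul_apply, Fin.sum_univ_two]
  · simp only [map_mul, rho0_gen]
    refine Matrix.ext fun i j => ?_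
    fin_cases i <;> fin_cases j <;>
      simp [mats_0, mats_1, mats_2, mats_3, mats_4, mats_5,
        Matrix.mul_apply, Fin.sum_univ_two]
  · simp only [map_mul, rho0_gen]
    refine Matrix.ext fun i j => ?_
    fin_cases i <;> fin_cases j <;>
      simp [mats_0, mats_1, mats_2, mats_3, mats_4, mats_5,
        Matrix.mul_apply, Fin.sum_univ_two]
  · simp only [map_sub, map_mul, rho0_gen]
    refine Matrix.ext fun i j => ?_
    fin_cases i <;> fin_cases j <;>
      simp [mats_0, mats_1, mats_2, mats_3, mats_4, mats_5,
        Matrix.mul_apply, Fin.sum_univ_two]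
  · simp only [map_sub, map_mul, rho0_gen]
    refine Matrix.ext fun i j => ?_
    fin_cases i <;> fin_cases j <;>
      simp [mats_0, mats_1, mats_2, mats_3, mats_4, mats_5,
        Matrix.mul_apply, Fin.sum_univ_two]
  · simp only [map_sub, map_mul, rho0_gen]
    refine Matrix.ext fun i j => ?_
    fin_cases i <;> fin_cases j <;>
      simp [mats_0, mats_1, mats_2, mats_3, mats_4, mats_5,
        Matrix.mul_apply, Fin.sum_univ_two]
  · simp only [map_sub, map_mul, rho0_gen]
    refine Matrix.ext fun i j => ?_
    fin_cases i <;> fin_cases j <;>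
      simp [mats_0, mats_1, mats_2, mats_3, mats_4, mats_5,
        Matrix.mul_apply, Fin.sum_univ_two]
  · rw [cycDer2, map_sub, rho0_word3, rho0_word3]
    refine Matrix.ext fun i j => ?_
    fin_cases i <;> fin_cases j <;>
      simp [mats_0, mats_1, mats_2, mats_3, mats_4, mats_5,
        Matrix.mul_apply, Fin.sum_univ_two] <;> ring
  · rw [cycDer3, map_sub, rho0_word3, rho0_word3]
    refine Matrix.ext fun i j => ?_
    fin_cases i <;> fin_cases j <;>
      simp [mats_0, mats_1, mats_2, mats_3, mats_4, mats_5,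
        Matrix.mul_apply, Fin.sum_univ_two] <;> ring
  · rw [cycDer4, map_sub, rho0_word3, rho0_word3]
    refine Matrix.ext fun i j => ?_
    fin_cases i <;> fin_cases j <;>
      simp [mats_0, mats_1, mats_2, mats_3, mats_4, mats_5,
        Matrix.mul_apply, Fin.sum_univ_two] <;> ring
  · rw [cycDer5, map_sub, rho0_word3, rho0_word3]
    refine Matrix.ext fun i j => ?_
    fin_cases i <;> fin_cases j <;>
      simp [mats_0, mats_1, mats_2, mats_3, mats_4, mats_5,
        Matrix.mul_apply, Fin.sum_univ_two] <;> ring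

def rhoA : A →ₐ[ℂ] MatB := RingQuot.liftAlgHom ℂ ⟨rho0, rho0_rel⟩

lemma rhoA_mk (f : FA (Fin 6)) : rhoA (mk f) = rho0 f :=
  RingQuot.liftAlgHom_mkAlgHom_apply ℂ rho0 rho0_rel f

def tv : Fin 2 → Fin 4 := ![0, 1]
def sv : Fin 2 → Fin 4 := ![2, 3]
def u : Fin 4 → P4 := fun k => X (tv (iv k)) * X (sv (jv k))

lemma rhoA_e1 : rhoA e1 = !![1,0;0,0] := by rw [e1, rhoA_mk, rho0_gen]; rfl
lemma rhoA_e2 : rhoA e2 = !![0,0;0,1] := by rw [e2, rhoA_mk, rho0_gen]; rfl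
lemma rhoA_x (i : Fin 2) : rhoA (x i) = !![0,0;X (tv i),0] := by
  fin_cases i
  · show rhoA (mk (gen 2)) = _; rw [rhoA_mk, rho0_gen]; rfl
  · show rhoA (mk (gen 3)) = _; rw [rhoA_mk, rho0_gen]; rfl
lemma rhoA_y (i : Fin 2) : rhoA (y i) = !![0,X (sv i);0,0] := by
  fin_cases i
  · show rhoA (mk (gen 4)) = _; rw [rhoA_mk, rho0_gen]; rfl
  · show rhoA (mk (gen 5)) = _; rw [rhoA_mk, rho0_gen]; rfl

lemma rhoA_z (k : Fin 4) : rhoA (z k) = !![u k, 0; 0, 0] := by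
  rw [z, map_mul, rhoA_x, rhoA_y, u]
  refine Matrix.ext fun i j => ?_
  fin_cases i <;> fin_cases j <;>
    simp [Matrix.mul_apply, Fin.sum_univ_two] <;> ring

lemma rhoA_w (k : Fin 4) : rhoA (w k) = !![0, 0; 0, u k] := by
  rw [w, map_mul, rhoA_x, rhoA_y, u]
  refine Matrix.ext fun i j => ?_
  fin_cases i <;> fin_cases j <;>
    simp [Matrix.mul_apply, Fin.sum_univ_two] <;> ring

def sigma : P4 →ₐ[ℂ] P4 := aeval u
def eps : P4 →ₐ[ℂ] P4 := aeval 0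

lemma algebraMap_MatB (r : ℂ) : algebraMap ℂ MatB r = !![C r, 0; 0, C r] := by
  ext i j; fin_cases i <;> fin_cases j <;>
    simp [Matrix.algebraMap_matrix_apply, algebraMap_eq]

lemma rhoA_zP (p : P4) : rhoA (zP p) = !![sigma p, 0; 0, eps p] := by
  induction p using MvPolynomial.induction_on with
  | C r =>
      have h2 : zP (C r) = algebraMap ℂ A r := by simp [zP, algebraMap_eq]
      rw [h2, AlgHom.commutes, algebraMap_MatB]
      simp [sigma, eps, algebraMap_eq]
  | add p q hp hq =>
      rw [map_add, map_add, hp, hq, map_add, map_add]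
      refine Matrix.ext fun i j => ?_
      fin_cases i <;> fin_cases j <;> simp
  | mul_X p k hp =>
      rw [map_mul, map_mul, hp, zP_X, rhoA_z, map_mul, map_mul, sigma, aeval_X, eps, aeval_X]
      refine Matrix.ext fun i j => ?_
      fin_cases i <;> fin_cases j <;>
        simp [Matrix.mul_apply, Fin.sum_univ_two, sigma, u]

lemma rhoA_wP (p : P4) : rhoA (wP p) = !![eps p, 0; 0, sigma p] := by
  induction p using MvPolynomial.induction_on with
  | C r =>
      have h2 : wP (C r) = algebraMap ℂ A r := by simp [wP, algebraMap_eq]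
      rw [h2, AlgHom.commutes, algebraMap_MatB]
      simp [sigma, eps, algebraMap_eq]
  | add p q hp hq =>
      rw [map_add, map_add, hp, hq, map_add, map_add]
      refine Matrix.ext fun i j => ?_
      fin_cases i <;> fin_cases j <;> simp
  | mul_X p k hp =>
      rw [map_mul, map_mul, hp, wP_X, rhoA_w, map_mul, map_mul, sigma, aeval_X, eps, aeval_X]
      refine Matrix.ext fun i j => ?_
      fin_cases i <;> fin_cases j <;>
        simp [Matrix.mul_apply, Fin.sum_univ_two, sigma, u]

lemma rhoA_central (p₁ p₂ : P4) :
    rhoA (e1 * zP p₁ + e2 * wP p₂) = !![sigma p₁, 0; 0, sigma p₂] := by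
  rw [map_add, map_mul, map_mul, rhoA_e1, rhoA_e2, rhoA_zP, rhoA_wP]
  refine Matrix.ext fun i j => ?_
  fin_cases i <;> fin_cases j <;>
    simp [Matrix.mul_apply, Fin.sum_univ_two]

lemma sigma_eq_of_central {t : A} (ht : t ∈ Subalgebra.center ℂ A) {p₁ p₂ : P4}
    (hdec : t = e1 * zP p₁ + e2 * wP p₂) : sigma p₁ = sigma p₂ := by
  have hx : x 0 * t = t * x 0 := Subalgebra.mem_center_iff.mp ht (x 0)
  have := congrArg rhoA hx
  rw [map_mul, map_mul, hdec, rhoA_central, rhoA_x] at this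
  have h10 := congrFun (congrFun this 1) 0
  simp [Matrix.mul_apply, Fin.sum_univ_two, tv] at h10
  -- h10 : X 0 * sigma p₁ = sigma p₂ * X 0  (some orientation)
  have hX : (X 0 : P4) ≠ 0 := X_ne_zero 0
  apply mul_left_cancel₀ hX
  linear_combination h10

end Conifold
namespace Conifold
open MvPolynomial

def uExp : Fin 4 → (Fin 4 →₀ ℕ) := fun k =>
  Finsupp.single (tv (iv k)) 1 + Finsupp.single (sv (jv k)) 1

lemma X_as_monomial (a : Fin 4) : (X a : P4) = monomial (Finsupp.single a 1) 1 := by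
  rw [← pow_one (X a : P4), X_pow_eq_monomial]

lemma u_eq_monomial (k : Fin 4) : u k = monomial (uExp k) 1 := by
  rw [u, uExp, X_as_monomial, X_as_monomial, monomial_mul, one_mul]

def fmap (d : Fin 4 →₀ ℕ) : Fin 4 →₀ ℕ := ∑ k : Fin 4, d k • uExp k

lemma prod_monomial_one (s : Finset (Fin 4)) (e : Fin 4 → (Fin 4 →₀ ℕ)) :
    (∏ k ∈ s, (monomial (e k) (1 : ℂ))) = monomial (∑ k ∈ s, e k) 1 := by
  induction s using Finset.cons_induction with
  | empty => simp [monomial_zero']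
  | cons a s ha ih => rw [Finset.prod_cons, Finset.sum_cons, ih, monomial_mul, one_mul]

lemma sigma_monomial (d : Fin 4 →₀ ℕ) (cc : ℂ) :
    sigma (monomial d cc) = monomial (fmap d) cc := by
  rw [sigma, aeval_monomial, fmap, Finsupp.prod_fintype _ _ (fun k => pow_zero (u k))]
  have hk : ∀ k : Fin 4, u k ^ d k = monomial (d k • uExp k) 1 := fun k => by
    rw [u_eq_monomial, monomial_pow, one_pow]
  simp_rw [hk]
  rw [prod_monomial_one, algebraMap_eq, C_mul_monomial, mul_one]

lemma uExp_0 : uExp 0 = Finsupp.single 0 1 + Finsupp.single 2 1 := rfl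
lemma uExp_1 : uExp 1 = Finsupp.single 0 1 + Finsupp.single 3 1 := rfl
lemma uExp_2 : uExp 2 = Finsupp.single 1 1 + Finsupp.single 2 1 := rfl
lemma uExp_3 : uExp 3 = Finsupp.single 1 1 + Finsupp.single 3 1 := rfl

lemma fmap_coords (d : Fin 4 →₀ ℕ) :
    fmap d 0 = d 0 + d 1 ∧ fmap d 1 = d 2 + d 3 ∧
    fmap d 2 = d 0 + d 2 ∧ fmap d 3 = d 1 + d 3 := by
  refine ⟨?_, ?_, ?_, ?_⟩ <;>
    simp [fmap, Fin.sum_univ_four, uExp_0, uExp_1, uExp_2, uExp_3,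
      Finsupp.add_apply, Finsupp.smul_apply, Finsupp.single_apply]

open Fin.NatCast in
lemma monomial_factor (d : Fin 4 →₀ ℕ) (a b k : ℕ) (m : Fin 4 →₀ ℕ)
    (ha : a ≠ b)
    (hm : d = m + (Finsupp.single (a : Fin 4) k + Finsupp.single (b : Fin 4) k)) : True := trivial

lemma diff_mem_aux {d d' : Fin 4 →₀ ℕ} (h : fmap d = fmap d') (h0 : d' 0 ≤ d 0) :
    (monomial d 1 - monomial d' 1 : P4) ∈ Ideal.span {qPoly} := by
  obtain ⟨c0, c1, c2, c3⟩ := fmap_coords d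
  obtain ⟨c0', c1', c2', c3'⟩ := fmap_coords d'
  have h0' : d 0 + d 1 = d' 0 + d' 1 := by rw [← c0, ← c0', h]
  have h2' : d 0 + d 2 = d' 0 + d' 2 := by rw [← c2, ← c2', h]
  have h3' : d 1 + d 3 = d' 1 + d' 3 := by rw [← c3, ← c3', h]
  set k := d 0 - d' 0 with hk
  set m : Fin 4 →₀ ℕ := Finsupp.equivFunOnFinite.symm ![d' 0, d 1, d 2, d' 3] with hmdef
  have hmv : ∀ r : Fin 4, m r = ![d' 0, d 1, d 2, d' 3] r := fun r => rfl
  have hd : d = m + (Finsupp.single 0 k + Finsupp.single 3 k) := by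
    ext r
    rw [Finsupp.add_apply, Finsupp.add_apply, hmv, Finsupp.single_apply, Finsupp.single_apply]
    fin_cases r <;> simp <;> omega
  have hd' : d' = m + (Finsupp.single 1 k + Finsupp.single 2 k) := by
    ext r
    rw [Finsupp.add_apply, Finsupp.add_apply, hmv, Finsupp.single_apply, Finsupp.single_apply]
    fin_cases r <;> simp <;> omega
  have hmon : ∀ (a b : Fin 4), (monomial (m + (Finsupp.single a k + Finsupp.single b k)) 1 : P4)
      = monomial m 1 * (X a * X b) ^ k := by
    intro a b
    rw [mul_pow, X_pow_eq_monomial, X_pow_eq_monomial, monomial_mul, monomial_mul]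
    simp
  rw [hd, hd', hmon, hmon, ← mul_sub]
  apply Ideal.mem_span_singleton.mpr
  exact Dvd.dvd.mul_left (sub_dvd_pow_sub_pow _ _ k) _

lemma diff_mem {d d' : Fin 4 →₀ ℕ} (h : fmap d = fmap d') :
    (monomial d 1 - monomial d' 1 : P4) ∈ Ideal.span {qPoly} := by
  rcases le_total (d' 0) (d 0) with h0 | h0
  · exact diff_mem_aux h h0
  · have := diff_mem_aux h.symm h0
    rw [show (monomial d 1 - monomial d' 1 : P4) = -(monomial d' 1 - monomial d 1) by ring]
    exact neg_mem this

lemma sigma_ker_aux : ∀ n : ℕ, ∀ p : P4, p.support.card ≤ n → sigma p = 0 →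
    p ∈ Ideal.span {qPoly} := by
  intro n
  induction n with
  | zero =>
      intro p hp _
      have : p.support = ∅ := Finset.card_eq_zero.mp (Nat.le_zero.mp hp)
      have : p = 0 := by
        rwa [← MvPolynomial.support_eq_empty]
      rw [this]; exact Ideal.zero_mem _
  | succ n ih =>
      intro p hp hs
      by_cases hp0 : p = 0
      · rw [hp0]; exact Ideal.zero_mem _
      obtain ⟨d, hd'⟩ := MvPolynomial.support_nonempty.mpr hp0
      have hd : d ∈ p.support := hd'
      have hrep : (0 : P4) = ∑ e ∈ p.support, monomial (fmap e) (coeff e p) := by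
        rw [← hs]
        conv_lhs => rw [p.as_sum]
        rw [map_sum]
        exact Finset.sum_congr rfl fun e _ => sigma_monomial e _
      have hco : (∑ e ∈ p.support, if fmap e = fmap d then coeff e p else 0) = 0 := by
        have h0 := congrArg (coeff (fmap d)) hrep
        rw [coeff_zero, coeff_sum] at h0
        simp_rw [coeff_monomial] at h0
        exact h0.symm
      by_cases hex : ∃ d' ∈ p.support, d' ≠ d ∧ fmap d' = fmap d
      · obtain ⟨d', hd'm, hne, hfe⟩ := hex
        set cd := coeff d p with hcd
        set p' := p - C cd * (monomial d 1 - monomial d' 1) with hp'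
        have hσ' : sigma p' = 0 := by
          rw [hp', map_sub, map_mul, map_sub, sigma_monomial, sigma_monomial, hfe,
            sub_self, mul_zero, sub_zero, hs]
        have hcoeff : ∀ e, coeff e p' = coeff e p
            - cd * ((if d = e then 1 else 0) - (if d' = e then 1 else 0)) := by
          intro e
          rw [hp', coeff_sub, coeff_C_mul, coeff_sub, coeff_monomial, coeff_monomial]
        have hsub : p'.support ⊆ p.support.erase d := by
          intro e he
          rw [mem_support_iff] at he
          rw [Finset.mem_erase]
          constructor
          · rintro rfl
            apply he
            rw [hcoeff, if_pos rfl, if_neg hne, sub_zero, mul_one, sub_self]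
          · by_cases hde : e = d
            · rw [hde]; exact hd
            · by_cases hed' : e = d'
              · rw [hed']; exact hd'm
              · rw [mem_support_iff]
                intro h0
                apply he
                rw [hcoeff, h0, if_neg (fun h => hde h.symm), if_neg (fun h => hed' h.symm)]
                ring
        have hcard : p'.support.card ≤ n := by
          have h3 : 0 < p.support.card := Finset.card_pos.mpr ⟨d, hd⟩
          calc p'.support.card ≤ (p.support.erase d).card := Finset.card_le_card hsub
            _ = p.support.card - 1 := Finset.card_erase_of_mem hd
            _ ≤ n := by omega
        have hmem' := ih p' hcard hσ'
        have hrecon : p = p' + C cd * (monomial d 1 - monomial d' 1) := by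
          rw [hp']; ring
        rw [hrecon]
        exact Ideal.add_mem _ hmem' (Ideal.mul_mem_left _ _ (diff_mem hfe.symm))
      · push_neg at hex
        have hsum : (∑ e ∈ p.support, if fmap e = fmap d then coeff e p else 0)
            = coeff d p := by
          rw [Finset.sum_eq_single_of_mem d hd
            (fun b hb hbne => if_neg (hex b hb hbne)), if_pos rfl]
        rw [hco] at hsum
        exact absurd hsum.symm (mem_support_iff.mp hd)

end Conifold
namespace Conifold
open MvPolynomial

lemma qPoly_ne : qPoly ≠ 0 := by
  intro h
  have := congrArg (eval ![1,0,0,1]) h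
  simp [qPoly] at this

lemma qPoly_hom : qPoly.IsHomogeneous 2 := by
  have h03 : (X 0 * X 3 : P4).IsHomogeneous 2 :=
    (isHomogeneous_X ℂ 0).mul (isHomogeneous_X ℂ 3)
  have h12 : (X 1 * X 2 : P4).IsHomogeneous 2 :=
    (isHomogeneous_X ℂ 1).mul (isHomogeneous_X ℂ 2)
  exact h03.sub h12

lemma psi_surj : Function.Surjective psi := by
  rintro ⟨t, ht⟩
  obtain ⟨p₁, p₂, hdec⟩ := central_decomp ht
  have hσ : sigma (p₁ - p₂) = 0 := by
    rw [map_sub, sigma_eq_of_central ht hdec, sub_self]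
  have hmem := sigma_ker_aux (p₁ - p₂).support.card (p₁ - p₂) le_rfl hσ
  refine ⟨p₁, ?_⟩
  apply Subtype.ext
  show (psi p₁ : A) = t
  rw [psi_coe, hdec]
  have hw : wP p₁ = wP p₂ := by
    have h0 : wP (p₁ - p₂) = 0 := wP_span hmem
    rw [map_sub, sub_eq_zero] at h0
    exact h0
  rw [hw]

lemma psi_ker : RingHom.ker psi.toRingHom = Ideal.span {qPoly} := by
  ext p
  rw [RingHom.mem_ker]
  constructor
  · intro hp
    have hp' : psi p = 0 := hp
    have h0 : (psi p : A) = 0 := by rw [hp']; rfl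
    rw [psi_coe] at h0
    have hM := congrArg rhoA h0
    rw [rhoA_central, map_zero] at hM
    have hσ : sigma p = 0 := by
      have := congrFun (congrFun hM 0) 0
      simpa using this
    exact sigma_ker_aux _ p le_rfl hσ
  · intro hp
    show psi p = 0
    apply Subtype.ext
    show (psi p : A) = 0
    rw [psi_coe, zP_span hp, wP_span hp, mul_zero, mul_zero, add_zero]

end Conifold

theorem conifold_center_is_quadric_cone :
    ∃ ψ : MvPolynomial (Fin 4) ℂ →ₐ[ℂ] (Subalgebra.center ℂ ConifoldAlgebra),
      Function.Surjective ψ ∧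
        ∃ q : MvPolynomial (Fin 4) ℂ, q ≠ 0 ∧ q.IsHomogeneous 2 ∧
          RingHom.ker ψ.toRingHom = Ideal.span {q} := by
  exact ⟨Conifold.psi, Conifold.psi_surj,
    Conifold.qPoly, Conifold.qPoly_ne, Conifold.qPoly_hom, Conifold.psi_ker⟩
end
end

section
/- Let D = ⊕_{r≥0} D_r be a graded associative algebra with a degree −1 super-derivation ξ (ξ² = 0), let ω ∈ (Ω²D)_cyc satisfy L_ξ ω = 0, and suppose w ∈ D satisfies dw = ι_δ ω in Ω¹D, where δ = ad(1⊗1). If additionally ξ(D) ∩ ℂ = 0, then ξ(w) = 0; consequently, the super-derivation ∂ on the free product 𝔇 = D * ℂ[t] defined by ∂(t) = w and ∂|_D = ξ satisfies ∂² = 0. -/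
/-!
STATEMENT 17. Let `D = ⊕_{r≥0} D_r` be a graded algebra with a degree `−1`
super-derivation `ξ` with `ξ² = 0`, let `ω ∈ (Ω²D)_cyc` be a cyclic 2-form with
`L_ξ ω = 0` and `d ω = 0`, and let `w ∈ D` satisfy `dw = ι_δ ω` in `Ω¹D`,
where `δ = ad(1⊗1)`.  If moreover `ξ(D) ∩ ℂ = 0`, then `ξ(w) = 0`; consequently the
super-derivation `∂` on the free product `𝔇 = D * ℂ[t]` defined by `∂(t) = w`,
`∂|_D = ξ` satisfies `∂² = 0`.

1-forms are modeled inside `D ⊗ D` with `d x = 1⊗x − x⊗1`; the space of cyclic 2-forms,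
the reduced contraction `ι_δ`, and the Lie derivatives `L_ξ` on 1- and (cyclic) 2-forms
are abstracted, subject to their defining compatibilities (`ι_δ ∘ L_ξ = L_ξ ∘ ι_δ` and
`L_ξ ∘ d = ± d ∘ ξ`, the sign being immaterial).  The consequence `∂² = 0` is stated for
any algebra `E` generated by (the image of) `D` together with an element `t`, with `∂`
extending `ξ`, `∂ t = w`, and `∂²` a derivation (as it automatically is for an odd
super-derivation `∂`); this includes the free product `𝔇 = D * ℂ[t]`.
-/

open scoped TensorProduct

noncomputable section

theorem xi_of_w_vanishes_and_differential_squares_to_zero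
    (D : Type) [Ring D] [Algebra ℂ D] [Nontrivial D]
    (ξ : D →ₗ[ℂ] D) (hξsq : ∀ x : D, ξ (ξ x) = 0)
    (Ω2cyc : Type) [AddCommGroup Ω2cyc] [Module ℂ Ω2cyc]
    (ιδ : Ω2cyc →ₗ[ℂ] D ⊗[ℂ] D)
    (Lξ1 : D ⊗[ℂ] D →ₗ[ℂ] D ⊗[ℂ] D) (Lξ2 : Ω2cyc →ₗ[ℂ] Ω2cyc)
    (hLd : ∀ x : D, Lξ1 ((1 : D) ⊗ₜ[ℂ] x - x ⊗ₜ[ℂ] (1 : D)) =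
        (1 : D) ⊗ₜ[ℂ] (ξ x) - (ξ x) ⊗ₜ[ℂ] (1 : D))
    (hcomm : ∀ η : Ω2cyc, ιδ (Lξ2 η) = Lξ1 (ιδ η))
    (ω : Ω2cyc) (hLω : Lξ2 ω = 0)
    (w : D) (hdw : (1 : D) ⊗ₜ[ℂ] w - w ⊗ₜ[ℂ] (1 : D) = ιδ ω)
    (hnoC : ∀ x : D, (∃ c : ℂ, ξ x = c • (1 : D)) → ξ x = 0) :
    ξ w = 0 ∧
      ∀ (E : Type) [Ring E] [Algebra ℂ E] (j : D →ₐ[ℂ] E) (t : E) (del : E →ₗ[ℂ] E),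
        (∀ x : D, del (j x) = j (ξ x)) → del t = j w →
        (∀ u v : E, del (del (u * v)) = del (del u) * v + u * del (del v)) →
        Algebra.adjoin ℂ (Set.range (⇑j) ∪ {t}) = ⊤ →
        ∀ u : E, del (del u) = 0 := by
  -- Step 1: 1 ⊗ ξw − ξw ⊗ 1 = 0
  have hz : (1 : D) ⊗ₜ[ℂ] (ξ w) - (ξ w) ⊗ₜ[ℂ] (1 : D) = 0 := by
    have : Lξ1 ((1 : D) ⊗ₜ[ℂ] w - w ⊗ₜ[ℂ] (1 : D)) = 0 := by
      rw [hdw, ← hcomm, hLω, map_zero]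
    rw [hLd w] at this
    exact this
  -- Step 2: build a linear functional f with f 1 = 1
  have injT : Function.Injective (LinearMap.toSpanSingleton ℂ D (1 : D)) := by
    intro a b hab
    simp only [LinearMap.toSpanSingleton_apply] at hab
    have := (algebraMap ℂ D).injective
    apply this
    rw [Algebra.algebraMap_eq_smul_one, Algebra.algebraMap_eq_smul_one]
    exact hab
  set T := LinearMap.toSpanSingleton ℂ D (1 : D) with hT
  let e : ℂ ≃ₗ[ℂ] LinearMap.range T := LinearEquiv.ofInjective T injT
  obtain ⟨f, hf⟩ := LinearMap.exists_extend (e.symm : LinearMap.range T →ₗ[ℂ] ℂ)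
  have hmem : (1 : D) ∈ LinearMap.range T := ⟨1, by simp [hT]⟩
  have hf1 : f 1 = 1 := by
    have h1 : (⟨(1 : D), hmem⟩ : LinearMap.range T) = e 1 := by
      apply Subtype.ext
      simp [e, LinearEquiv.ofInjective_apply, hT]
    have := congrArg (fun g => g ⟨(1 : D), hmem⟩) hf
    simp only [LinearMap.comp_apply, Submodule.subtype_apply] at this
    rw [this, h1]
    simp
  -- Step 3: apply (f ⊗ id) to hz
  let G : D ⊗[ℂ] D →ₗ[ℂ] D := TensorProduct.lift ((LinearMap.lsmul ℂ D).comp f)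
  have hG : G ((1 : D) ⊗ₜ[ℂ] (ξ w) - (ξ w) ⊗ₜ[ℂ] (1 : D)) = ξ w - f (ξ w) • 1 := by
    simp [G, hf1]
  have hxiw : ξ w = 0 := by
    apply hnoC
    refine ⟨f (ξ w), ?_⟩
    have h0 : ξ w - f (ξ w) • (1 : D) = 0 := by rw [← hG, hz, map_zero]
    exact sub_eq_zero.mp h0
  refine ⟨hxiw, ?_⟩
  -- Step 4: the derivation part
  intro E _ _ j t del hdj hdt hleib hadj u
  have h1 : del (del (1 : E)) = 0 := by
    have h2 : del (del (1 : E)) = del (del (1 : E)) + del (del (1 : E)) := by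
      simpa using hleib 1 1
    exact right_eq_add.mp h2
  have hu : u ∈ Algebra.adjoin ℂ (Set.range (⇑j) ∪ {t}) := by
    rw [hadj]; exact Algebra.mem_top
  induction hu using Algebra.adjoin_induction with
  | mem x hx =>
    rcases hx with hx | hx
    · obtain ⟨y, rfl⟩ := hx
      rw [hdj y, hdj (ξ y), hξsq y, map_zero]
    · rcases hx with rfl
      rw [hdt, hdj w, hxiw, map_zero]
  | algebraMap c =>
    rw [Algebra.algebraMap_eq_smul_one, map_smul, map_smul, h1, smul_zero]
  | add a b _ _ ha hb => rw [map_add, map_add, ha, hb, add_zero]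
  | mul a b _ _ ha hb => rw [hleib a b, ha, hb, zero_mul, mul_zero, add_zero]
end
end
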